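/- arXiv:2509.11785 — 6 statements merged into one kernel-verified Lean document; each statement's English description precedes it below -/
import Mathlib

section
/- Let ℐ : 𝒪(X) → CP(𝒜, B(ℋ)) be a unital CP instrument. Then the following are equivalent: (i) ℐ is a spectral instrument, i.e. ℐ(A) is a *-homomorphism for every A ∈ 𝒪(X); (ii) ℐ(A)(a) = φ_ℐ(a)μ_ℐ(A) = μ_ℐ(A)φ_ℐ(a) for all a ∈ 𝒜 and A ∈ 𝒪(X), where the CP marginal φ_ℐ : 𝒜 → B(ℋ) is a unital *-homomorphism and the POVM marginal μ_ℐ : 𝒪(X) → B(ℋ) is a projection-valued (spectral) measure. -/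
open scoped InnerProductSpace ComplexOrder
open Function

noncomputable section

/-- A linear map `φ : A →ₗ[ℂ] B(H)` is completely positive if for all `n`, `a : Fin n → A`
and `h : Fin n → H` one has `0 ≤ ∑ i j, ⟪h i, φ(aᵢ* aⱼ) (h j)⟫`. -/
def IsCompletelyPositive {A H : Type*} [NormedRing A] [StarRing A] [NormedAlgebra ℂ A]
    [NormedAddCommGroup H] [InnerProductSpace ℂ H]
    (φ : A →ₗ[ℂ] (H →L[ℂ] H)) : Prop :=
  ∀ (n : ℕ) (a : Fin n → A) (h : Fin n → H),
    0 ≤ ∑ i, ∑ j, (inner ℂ (h i) (φ (star (a i) * a j) (h j)) : ℂ)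

/-- A CP instrument on a measurable space `X` with values in `CP(A, B(H))`:
each `ℐ(s)` is completely positive and `s ↦ ⟪h, ℐ(s)(a) k⟫` is countably additive. -/
structure CPInstrument (X : Type*) [MeasurableSpace X] (A : Type*) (H : Type*)
    [NormedRing A] [StarRing A] [NormedAlgebra ℂ A]
    [NormedAddCommGroup H] [InnerProductSpace ℂ H] where
  toFun : Set X → A →ₗ[ℂ] (H →L[ℂ] H)
  cp : ∀ s : Set X, MeasurableSet s → IsCompletelyPositive (toFun s)
  countably_additive : ∀ (a : A) (h k : H) (s : ℕ → Set X),
    (∀ n, MeasurableSet (s n)) → Pairwise (Disjoint on s) →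
    HasSum (fun n => (inner ℂ h (toFun (s n) a k) : ℂ)) (inner ℂ h (toFun (⋃ n, s n) a k))

/-- A CP instrument is unital (normalized) if `ℐ(X)(1) = I`. -/
def CPInstrument.IsUnital {X A H : Type*} [MeasurableSpace X] [NormedRing A] [StarRing A]
    [NormedAlgebra ℂ A] [NormedAddCommGroup H] [InnerProductSpace ℂ H]
    (J : CPInstrument X A H) : Prop :=
  J.toFun Set.univ 1 = 1

/-- A projection-valued (spectral) measure on `X` acting on `K`. -/
structure IsPVM {X K : Type*} [MeasurableSpace X] [NormedAddCommGroup K]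
    [InnerProductSpace ℂ K] [CompleteSpace K] (E : Set X → K →L[ℂ] K) : Prop where
  selfAdjoint : ∀ s : Set X, MeasurableSet s → IsSelfAdjoint (E s)
  idempotent : ∀ s : Set X, MeasurableSet s → E s * E s = E s
  map_univ : E Set.univ = 1
  countably_additive : ∀ (h k : K) (s : ℕ → Set X),
    (∀ n, MeasurableSet (s n)) → Pairwise (Disjoint on s) →
    HasSum (fun n => (inner ℂ h (E (s n) k) : ℂ)) (inner ℂ h (E (⋃ n, s n) k))

/-- `(K, π, E, V)` is a minimal bi-dilation of the CP instrument `J`: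
`E` is a spectral measure commuting with the unital *-homomorphism `π`,
`J(s)(a) = V* π(a) E(s) V`, and `[π(A) E(𝒪(X)) V H] = K`. -/
structure IsMinimalBiDilation {X A H K : Type*} [MeasurableSpace X]
    [NormedRing A] [StarRing A] [NormedAlgebra ℂ A]
    [NormedAddCommGroup H] [InnerProductSpace ℂ H] [CompleteSpace H]
    [NormedAddCommGroup K] [InnerProductSpace ℂ K] [CompleteSpace K]
    (J : CPInstrument X A H) (π : A →⋆ₐ[ℂ] (K →L[ℂ] K))
    (E : Set X → K →L[ℂ] K) (V : H →L[ℂ] K) : Prop where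
  pvm : IsPVM E
  commutes : ∀ (s : Set X) (a : A), MeasurableSet s → E s * π a = π a * E s
  dilation : ∀ (s : Set X) (a : A), MeasurableSet s →
    J.toFun s a = (ContinuousLinearMap.adjoint V).comp ((π a * E s).comp V)
  minimal : (Submodule.span ℂ {y : K | ∃ (a : A) (s : Set X) (h : H),
      MeasurableSet s ∧ y = π a (E s (V h))}).topologicalClosure = ⊤

section ConvexityDefs

variable {X A H : Type*} [MeasurableSpace X] [NormedRing A] [StarRing A]
    [NormedAlgebra ℂ A] [NormedAddCommGroup H] [InnerProductSpace ℂ H] [CompleteSpace H]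

/-- `J'` is dominated by `J` if `J(s) - J'(s)` is completely positive for every measurable `s`. -/
def CPInstrument.Dominates (J J' : CPInstrument X A H) : Prop :=
  ∀ s : Set X, MeasurableSet s → IsCompletelyPositive (J.toFun s - J'.toFun s)

/-- A CP instrument is pure if every CP instrument it dominates is of the form `t • J`
for some `t ∈ [0,1]`. -/
def CPInstrument.IsPure (J : CPInstrument X A H) : Prop :=
  ∀ J' : CPInstrument X A H, J.Dominates J' →
    ∃ t : ℝ, 0 ≤ t ∧ t ≤ 1 ∧ ∀ s : Set X, MeasurableSet s → J'.toFun s = (t : ℂ) • J.toFun s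

/-- Extreme point of the convex set `I_H(X, A)` of unital CP instruments. -/
def CPInstrument.IsExtreme (J : CPInstrument X A H) : Prop :=
  J.IsUnital ∧ ∀ (J₁ J₂ : CPInstrument X A H) (t : ℝ), J₁.IsUnital → J₂.IsUnital →
    0 < t → t < 1 →
    (∀ s : Set X, MeasurableSet s →
      J.toFun s = (t : ℂ) • J₁.toFun s + ((1 - t : ℝ) : ℂ) • J₂.toFun s) →
    ∀ s : Set X, MeasurableSet s → J₁.toFun s = J.toFun s ∧ J₂.toFun s = J.toFun s

/-- C*-extreme point of the set `I_H(X, A)` of unital CP instruments: every proper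
C*-convex combination representing `J` consists of instruments unitarily equivalent to `J`. -/
def CPInstrument.IsCstarExtreme (J : CPInstrument X A H) : Prop :=
  J.IsUnital ∧ ∀ (n : ℕ) (Js : Fin n → CPInstrument X A H) (T : Fin n → H →L[ℂ] H),
    (∀ i, (Js i).IsUnital) → (∀ i, IsUnit (T i)) →
    (∑ i, ContinuousLinearMap.adjoint (T i) * T i) = 1 →
    (∀ (s : Set X) (a : A), MeasurableSet s →
      J.toFun s a = ∑ i, ContinuousLinearMap.adjoint (T i) * ((Js i).toFun s a) * T i) →
    ∀ i, ∃ U : H →L[ℂ] H,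
      ContinuousLinearMap.adjoint U * U = 1 ∧ U * ContinuousLinearMap.adjoint U = 1 ∧
      ∀ (s : Set X) (a : A), MeasurableSet s →
        (Js i).toFun s a = ContinuousLinearMap.adjoint U * (J.toFun s a) * U

end ConvexityDefs

private lemma op_ext_inner_zero {H : Type*} [NormedAddCommGroup H] [InnerProductSpace ℂ H]
    (T : H →L[ℂ] H) (h : ∀ x y : H, (inner ℂ x (T y) : ℂ) = 0) : T = 0 := by
  ext y
  have := h (T y) y
  simpa [inner_self_eq_zero] using this

private lemma CPInstrument.toFun_empty {X A H : Type*} [MeasurableSpace X]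
    [NormedRing A] [StarRing A] [NormedAlgebra ℂ A]
    [NormedAddCommGroup H] [InnerProductSpace ℂ H]
    (J : CPInstrument X A H) (a : A) : J.toFun ∅ a = 0 := by
  apply op_ext_inner_zero
  intro x y
  have h := J.countably_additive a x y (fun _ => (∅ : Set X))
    (fun _ => MeasurableSet.empty)
    (by intro i j hij; simp [Function.onFun])
  rw [Set.iUnion_empty] at h
  set c := (inner ℂ x (J.toFun ∅ a y) : ℂ) with hc
  have h0 : Filter.Tendsto (fun _ : ℕ => c) Filter.atTop (nhds 0) :=
    h.summable.tendsto_atTop_zero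
  have h1 : Filter.Tendsto (fun _ : ℕ => c) Filter.atTop (nhds c) := tendsto_const_nhds
  exact tendsto_nhds_unique h1 h0

private lemma CPInstrument.add_compl {X A H : Type*} [MeasurableSpace X]
    [NormedRing A] [StarRing A] [NormedAlgebra ℂ A]
    [NormedAddCommGroup H] [InnerProductSpace ℂ H]
    (J : CPInstrument X A H) {s : Set X} (hs : MeasurableSet s) (a : A) :
    J.toFun Set.univ a = J.toFun s a + J.toFun sᶜ a := by
  have key : ∀ x y : H, (inner ℂ x (J.toFun Set.univ a y) : ℂ)
      = inner ℂ x (J.toFun s a y) + inner ℂ x (J.toFun sᶜ a y) := by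
    intro x y
    set f : ℕ → Set X := fun n => if n = 0 then s else if n = 1 then sᶜ else ∅ with hf
    have hmeas : ∀ n, MeasurableSet (f n) := by
      intro n
      rcases n with _ | _ | n <;> simp [f, hs, hs.compl]
    have hdisj : Pairwise (Disjoint on f) := by
      intro i j hij
      rcases i with _ | _ | i <;> rcases j with _ | _ | j <;>
        simp_all [Function.onFun, f, disjoint_compl_right, disjoint_compl_left]
    have hunion : (⋃ n, f n) = Set.univ := by
      apply Set.eq_univ_of_forall
      intro z
      by_cases hz : z ∈ s
      · exact Set.mem_iUnion.mpr ⟨0, by simpa [f] using hz⟩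
      · exact Set.mem_iUnion.mpr ⟨1, by simpa [f] using hz⟩
    have h := J.countably_additive a x y f hmeas hdisj
    rw [hunion] at h
    have h2 : HasSum (fun n => (inner ℂ x (J.toFun (f n) a y) : ℂ))
        (∑ n ∈ Finset.range 2, (inner ℂ x (J.toFun (f n) a y) : ℂ)) := by
      apply hasSum_sum_of_ne_finset_zero
      intro n hn
      have hn2 : ¬ n < 2 := fun h' => hn (Finset.mem_range.mpr h')
      have hfe : f n = ∅ := by
        have h0 : n ≠ 0 := by omega
        have h1 : n ≠ 1 := by omega
        simp [f, h0, h1]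
      rw [hfe, J.toFun_empty]
      simp
    have := h.unique h2
    rw [this, Finset.sum_range_succ, Finset.sum_range_succ, Finset.sum_range_zero]
    simp [f]
  have hz : J.toFun Set.univ a - (J.toFun s a + J.toFun sᶜ a) = 0 := by
    apply op_ext_inner_zero
    intro x y
    simp only [ContinuousLinearMap.sub_apply, ContinuousLinearMap.add_apply,
      inner_sub_right, inner_add_right]
    rw [key x y]
    ring
  exact sub_eq_zero.mp hz

/-- **Characterization of spectral instruments.** A unital CP instrument `ℐ` is spectral
(every `ℐ(A)` is a *-homomorphism) iff it is the product of its marginals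
`ℐ(A)(a) = φ_ℐ(a) μ_ℐ(A) = μ_ℐ(A) φ_ℐ(a)`, with `φ_ℐ` a unital *-homomorphism and
`μ_ℐ` a projection-valued measure. -/
theorem CPInstrument.spectral_iff_product_of_marginals
    {X A H : Type*} [MeasurableSpace X]
    [NormedRing A] [StarRing A] [CStarRing A] [NormedAlgebra ℂ A] [StarModule ℂ A]
    [CompleteSpace A] [NormedAddCommGroup H] [InnerProductSpace ℂ H] [CompleteSpace H]
    (J : CPInstrument X A H) (hJ : J.IsUnital) :
    (∀ s : Set X, MeasurableSet s →
        (∀ a b : A, J.toFun s (a * b) = J.toFun s a * J.toFun s b) ∧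
        (∀ a : A, J.toFun s (star a) = star (J.toFun s a)))
    ↔
    ((∀ a b : A, J.toFun Set.univ (a * b) = J.toFun Set.univ a * J.toFun Set.univ b) ∧
     (∀ a : A, J.toFun Set.univ (star a) = star (J.toFun Set.univ a)) ∧
     J.toFun Set.univ 1 = 1 ∧
     (∀ s : Set X, MeasurableSet s → IsSelfAdjoint (J.toFun s 1) ∧
        (J.toFun s 1) * (J.toFun s 1) = J.toFun s 1) ∧
     (∀ (s : Set X) (a : A), MeasurableSet s →
        J.toFun s a = J.toFun Set.univ a * J.toFun s 1 ∧
        J.toFun s a = J.toFun s 1 * J.toFun Set.univ a)) := by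
  constructor
  · intro h
    have hm := h Set.univ MeasurableSet.univ
    refine ⟨hm.1, hm.2, hJ, ?_, ?_⟩
    · intro s hs
      constructor
      · have h1 := (h s hs).2 1
        rw [star_one] at h1
        exact h1.symm
      · have h1 := (h s hs).1 1 1
        rw [one_mul] at h1
        exact h1.symm
    · intro s a hs
      have hsum : (1 : H →L[ℂ] H) = J.toFun s 1 + J.toFun sᶜ 1 := by
        rw [← hJ]; exact J.add_compl hs 1
      have hPP : J.toFun s 1 * J.toFun s 1 = J.toFun s 1 := by
        have h1 := (h s hs).1 1 1
        rw [one_mul] at h1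
        exact h1.symm
      have hQQ : J.toFun sᶜ 1 * J.toFun sᶜ 1 = J.toFun sᶜ 1 := by
        have h1 := (h sᶜ hs.compl).1 1 1
        rw [one_mul] at h1
        exact h1.symm
      have hPQ : J.toFun s 1 * J.toFun sᶜ 1 = 0 := by
        have e : J.toFun s 1 * (J.toFun s 1 + J.toFun sᶜ 1) = J.toFun s 1 := by
          rw [← hsum, mul_one]
        rw [mul_add, hPP] at e
        have := add_left_cancel (a := J.toFun s 1)
          (by rw [e, add_zero] : J.toFun s 1 + J.toFun s 1 * J.toFun sᶜ 1
            = J.toFun s 1 + 0)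
        exact this
      have hQP : J.toFun sᶜ 1 * J.toFun s 1 = 0 := by
        have e : (J.toFun s 1 + J.toFun sᶜ 1) * J.toFun s 1 = J.toFun s 1 := by
          rw [← hsum, one_mul]
        rw [add_mul, hPP] at e
        have := add_left_cancel (a := J.toFun s 1)
          (by rw [e, add_zero] : J.toFun s 1 + J.toFun sᶜ 1 * J.toFun s 1
            = J.toFun s 1 + 0)
        exact this
      have e1 : J.toFun s a = J.toFun s a * J.toFun s 1 := by
        have h1 := (h s hs).1 a 1
        rwa [mul_one] at h1
      have e2 : J.toFun s a = J.toFun s 1 * J.toFun s a := by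
        have h1 := (h s hs).1 1 a
        rwa [one_mul] at h1
      have e3 : J.toFun sᶜ a = J.toFun sᶜ a * J.toFun sᶜ 1 := by
        have h1 := (h sᶜ hs.compl).1 a 1
        rwa [mul_one] at h1
      have e4 : J.toFun sᶜ a = J.toFun sᶜ 1 * J.toFun sᶜ a := by
        have h1 := (h sᶜ hs.compl).1 1 a
        rwa [one_mul] at h1
      have hsplit := J.add_compl hs a
      constructor
      · have hz : J.toFun sᶜ a * J.toFun s 1 = 0 := by
          rw [e3, mul_assoc, hQP, mul_zero]
        rw [hsplit, add_mul, hz, add_zero, ← e1]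
      · have hz : J.toFun s 1 * J.toFun sᶜ a = 0 := by
          rw [e4, ← mul_assoc, hPQ, zero_mul]
        rw [hsplit, mul_add, hz, add_zero, ← e2]
  · rintro ⟨hmul, hstar, hone, hproj, hfact⟩
    intro s hs
    have hP := hproj s hs
    have hfs : ∀ a : A, J.toFun s a = J.toFun Set.univ a * J.toFun s 1 ∧
        J.toFun s a = J.toFun s 1 * J.toFun Set.univ a := fun a => hfact s a hs
    have hcomm : ∀ c : A, J.toFun s 1 * J.toFun Set.univ c
        = J.toFun Set.univ c * J.toFun s 1 := fun c => (hfs c).2.symm.trans (hfs c).1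
    constructor
    · intro a b
      calc J.toFun s (a * b)
          = J.toFun Set.univ (a * b) * J.toFun s 1 := (hfs (a * b)).1
        _ = J.toFun Set.univ a * J.toFun Set.univ b * J.toFun s 1 := by rw [hmul]
        _ = J.toFun Set.univ a * (J.toFun Set.univ b * J.toFun s 1) := by
            rw [mul_assoc]
        _ = J.toFun Set.univ a * (J.toFun Set.univ b * (J.toFun s 1 * J.toFun s 1)) := by
            rw [hP.2]
        _ = J.toFun Set.univ a * ((J.toFun Set.univ b * J.toFun s 1) * J.toFun s 1) := by
            rw [mul_assoc]
        _ = J.toFun Set.univ a * ((J.toFun s 1 * J.toFun Set.univ b) * J.toFun s 1) := by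
            rw [hcomm b]
        _ = J.toFun Set.univ a * (J.toFun s 1 * (J.toFun Set.univ b * J.toFun s 1)) := by
            rw [mul_assoc]
        _ = (J.toFun Set.univ a * J.toFun s 1) * (J.toFun Set.univ b * J.toFun s 1) := by
            rw [mul_assoc]
        _ = J.toFun s a * J.toFun s b := by rw [← (hfs a).1, ← (hfs b).1]
    · intro a
      calc J.toFun s (star a)
          = J.toFun s 1 * J.toFun Set.univ (star a) := (hfs (star a)).2
        _ = J.toFun s 1 * star (J.toFun Set.univ a) := by rw [hstar]
        _ = star (J.toFun s 1) * star (J.toFun Set.univ a) := by rw [hP.1.star_eq]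
        _ = star (J.toFun Set.univ a * J.toFun s 1) := by rw [star_mul]
        _ = star (J.toFun s a) := by rw [← (hfs a).1]
end
end

section
/- Let ℐ : 𝒪(X) → CP(𝒜, B(ℋ)) be a CP instrument with minimal bi-dilation quadruple (𝒦, π, E, V). Then for any A ∈ 𝒪(X), ℐ(A) = 0 if and only if π(a)E(A) = 0 for all a ∈ 𝒜 (equivalently, E(A) = 0). In particular, for S ∈ 𝒪(X), ℐ is concentrated on S (i.e. ℐ(A) = ℐ(A ∩ S) for all A ∈ 𝒪(X)) if and only if the spectral instrument πE is concentrated on S (i.e. π(a)E(A) = π(a)E(A ∩ S) for all a ∈ 𝒜, A ∈ 𝒪(X)). -/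
open scoped InnerProductSpace ComplexOrder
open Function

noncomputable section

lemma countadd_empty_pair {X : Type*} [MeasurableSpace X] (f : Set X → ℂ)
    (hadd : ∀ s : ℕ → Set X, (∀ n, MeasurableSet (s n)) → Pairwise (Disjoint on s) →
      HasSum (fun n => f (s n)) (f (⋃ n, s n))) : f ∅ = 0 := by
  have h := hadd (fun _ => ∅) (fun _ => MeasurableSet.empty)
    (fun i j hij => by simp [Function.onFun])
  rw [Set.iUnion_empty] at h
  exact tendsto_nhds_unique tendsto_const_nhds h.summable.tendsto_atTop_zero

lemma countadd_union {X : Type*} [MeasurableSpace X] (f : Set X → ℂ)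
    (hadd : ∀ s : ℕ → Set X, (∀ n, MeasurableSet (s n)) → Pairwise (Disjoint on s) →
      HasSum (fun n => f (s n)) (f (⋃ n, s n)))
    (u v : Set X) (hu : MeasurableSet u) (hv : MeasurableSet v) (huv : Disjoint u v) :
    f (u ∪ v) = f u + f v := by
  set s : ℕ → Set X := fun n => if n = 0 then u else if n = 1 then v else ∅ with hs
  have hmeas : ∀ n, MeasurableSet (s n) := by
    intro n; simp only [hs]; split_ifs <;> first | exact hu | exact hv | exact MeasurableSet.empty
  have hdisj : Pairwise (Disjoint on s) := by
    intro i j hij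
    simp only [Function.onFun, hs]
    split_ifs <;>
      first
      | omega
      | exact huv | exact huv.symm
      | exact Set.disjoint_empty _ | exact Set.empty_disjoint _
  have hun : (⋃ n, s n) = u ∪ v := by
    apply Set.Subset.antisymm
    · refine Set.iUnion_subset fun n => ?_
      simp only [hs]; split_ifs
      · exact Set.subset_union_left
      · exact Set.subset_union_right
      · exact Set.empty_subset _
    · intro x hx
      rcases hx with h | h
      · exact Set.mem_iUnion.2 ⟨0, by simp [hs, h]⟩
      · exact Set.mem_iUnion.2 ⟨1, by simp [hs, h]⟩
  have h := hadd s hmeas hdisj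
  rw [hun] at h
  have h2 : HasSum (fun n => f (s n)) (∑ b ∈ ({0, 1} : Finset ℕ), f (s b)) := by
    apply hasSum_sum_of_ne_finset_zero
    intro b hb
    simp only [Finset.mem_insert, Finset.mem_singleton, not_or] at hb
    simp only [hs, if_neg hb.1, if_neg hb.2]
    exact countadd_empty_pair f hadd
  have := h.unique h2
  rw [this]
  simp [hs]

/-- For a CP instrument with minimal bi-dilation `(𝒦, π, E, V)`: `ℐ(A) = 0` iff
`π(a)E(A) = 0` for all `a`; in particular `ℐ` is concentrated on a measurable set `S`
iff the spectral instrument `πE` is concentrated on `S`. -/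
theorem CPInstrument.vanishes_iff_dilation_vanishes
    {X A H K : Type*} [MeasurableSpace X]
    [NormedRing A] [StarRing A] [CStarRing A] [NormedAlgebra ℂ A] [StarModule ℂ A]
    [CompleteSpace A] [NormedAddCommGroup H] [InnerProductSpace ℂ H] [CompleteSpace H]
    [NormedAddCommGroup K] [InnerProductSpace ℂ K] [CompleteSpace K]
    (J : CPInstrument X A H) (π : A →⋆ₐ[ℂ] (K →L[ℂ] K))
    (E : Set X → K →L[ℂ] K) (V : H →L[ℂ] K)
    (hdil : IsMinimalBiDilation J π E V)
    (S : Set X) (hS : MeasurableSet S) :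
    (∀ s : Set X, MeasurableSet s →
      (J.toFun s = 0 ↔ ∀ a : A, π a * E s = 0)) ∧
    ((∀ s : Set X, MeasurableSet s → J.toFun s = J.toFun (s ∩ S)) ↔
      (∀ (s : Set X) (a : A), MeasurableSet s → π a * E s = π a * E (s ∩ S))) := by

  obtain ⟨pvm, hcomm, hdilation, hmin⟩ := hdil
  -- Basic facts about E
  have hE_empty : E ∅ = 0 := by
    ext k; apply ext_inner_left ℂ; intro h
    rw [ContinuousLinearMap.zero_apply, inner_zero_right]
    exact countadd_empty_pair (fun t => (inner ℂ h (E t k) : ℂ)) (pvm.countably_additive h k)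
  have hE_add : ∀ u v : Set X, MeasurableSet u → MeasurableSet v → Disjoint u v →
      E (u ∪ v) = E u + E v := by
    intro u v hu hv huv
    ext k; apply ext_inner_left ℂ; intro h
    rw [ContinuousLinearMap.add_apply, inner_add_right]
    exact countadd_union (fun t => (inner ℂ h (E t k) : ℂ)) (pvm.countably_additive h k)
      u v hu hv huv
  have hE_orth : ∀ u v : Set X, MeasurableSet u → MeasurableSet v → Disjoint u v →
      E u * E v = 0 := by
    intro u v hu hv huv
    have hP : E u * E u = E u := pvm.idempotent u hu
    have hQ : E v * E v = E v := pvm.idempotent v hv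
    have h1 : E (u ∪ v) * E (u ∪ v) = E (u ∪ v) := pvm.idempotent _ (hu.union hv)
    rw [hE_add u v hu hv huv] at h1
    rw [add_mul, mul_add, mul_add, hP, hQ] at h1
    have h2 : E u * E v + E v * E u = 0 := by
      have h3 : E u * E v + E v * E u =
          (E u + E u * E v + (E v * E u + E v)) - (E u + E v) := by abel
      rw [h3, h1, sub_self]
    have hPQ : E u * E v = -(E v * E u) := eq_neg_of_add_eq_zero_left h2
    have hQP : E v * E u = -(E u * E v) := eq_neg_of_add_eq_zero_right h2
    have e1 : E u * E v = -(E u * E v * E u) := by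
      calc E u * E v = E u * (E u * E v) := by rw [← mul_assoc, hP]
        _ = E u * (-(E v * E u)) := by rw [← hPQ]
        _ = -(E u * E v * E u) := by rw [mul_neg, mul_assoc]
    have e2 : E v * E u = -(E u * E v * E u) := by
      calc E v * E u = E v * E u * E u := by rw [mul_assoc, hP]
        _ = -(E u * E v) * E u := by rw [← hQP]
        _ = -(E u * E v * E u) := by rw [neg_mul]
    have hcommPQ : E u * E v = E v * E u := e1.trans e2.symm
    have h4 : E u * E v + E u * E v = 0 := by rw [← hcommPQ] at h2; exact h2
    have h5 : (2 : ℂ) • (E u * E v) = 0 := by rw [two_smul]; exact h4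
    have := smul_eq_zero.mp h5
    simpa using this
  have hE_inter : ∀ s t : Set X, MeasurableSet s → MeasurableSet t →
      E s * E t = E (s ∩ t) := by
    intro s t hs ht
    have hst : MeasurableSet (s ∩ t) := hs.inter ht
    have h1 : E s = E (s ∩ t) + E (s \ t) := by
      rw [← hE_add _ _ hst (hs.diff ht)
        (disjoint_sdiff_self_right.mono_left Set.inter_subset_right),
        Set.inter_union_diff]
    have h2 : E t = E (s ∩ t) + E (t \ s) := by
      rw [← hE_add _ _ hst (ht.diff hs)
        (disjoint_sdiff_self_right.mono_left Set.inter_subset_left),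
        show s ∩ t ∪ t \ s = t by rw [Set.inter_comm, Set.inter_union_diff]]
    rw [h1, h2, add_mul, mul_add, mul_add, pvm.idempotent _ hst,
      hE_orth _ _ hst (ht.diff hs)
        (Set.disjoint_of_subset Set.inter_subset_left (le_refl _) disjoint_sdiff_self_right),
      hE_orth _ _ (hs.diff ht) hst
        (Set.disjoint_of_subset (le_refl _) Set.inter_subset_right disjoint_sdiff_self_left),
      hE_orth _ _ (hs.diff ht) (ht.diff hs)
        (Set.disjoint_of_subset (le_refl _) Set.diff_subset disjoint_sdiff_self_left),
      add_zero, add_zero, add_zero]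
  -- the first conjunct
  have main : ∀ s : Set X, MeasurableSet s → (J.toFun s = 0 ↔ ∀ a : A, π a * E s = 0) := by
    intro s hs
    constructor
    · intro hJ a
      have key : ∀ (t : Set X), MeasurableSet t → ∀ h : H, E (s ∩ t) (V h) = 0 := by
        intro t ht h
        have hwm : MeasurableSet (s ∩ t) := hs.inter ht
        have hswm : MeasurableSet (s \ (s ∩ t)) := hs.diff hwm
        have hsum : (inner ℂ h (J.toFun s 1 h) : ℂ) =
            inner ℂ h (J.toFun (s ∩ t) 1 h) + inner ℂ h (J.toFun (s \ (s ∩ t)) 1 h) := by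
          have := countadd_union (fun u => (inner ℂ h (J.toFun u 1 h) : ℂ))
            (J.countably_additive 1 h h) (s ∩ t) (s \ (s ∩ t)) hwm hswm
            disjoint_sdiff_self_right
          rw [Set.union_diff_cancel Set.inter_subset_left] at this
          exact this
        rw [hJ] at hsum
        simp only [LinearMap.zero_apply, ContinuousLinearMap.zero_apply, inner_zero_right]
          at hsum
        have hx : (0 : ℂ) ≤ inner ℂ h (J.toFun (s ∩ t) 1 h) := by
          have := J.cp (s ∩ t) hwm 1 (fun _ => (1 : A)) (fun _ => h)
          simpa using this
        have hy : (0 : ℂ) ≤ inner ℂ h (J.toFun (s \ (s ∩ t)) 1 h) := by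
          have := J.cp (s \ (s ∩ t)) hswm 1 (fun _ => (1 : A)) (fun _ => h)
          simpa using this
        have hx0 : (inner ℂ h (J.toFun (s ∩ t) 1 h) : ℂ) = 0 := by
          refine le_antisymm ?_ hx
          calc (inner ℂ h (J.toFun (s ∩ t) 1 h) : ℂ)
              ≤ inner ℂ h (J.toFun (s ∩ t) 1 h) + inner ℂ h (J.toFun (s \ (s ∩ t)) 1 h) :=
                le_add_of_nonneg_right hy
            _ = 0 := hsum.symm
        have hsa : ContinuousLinearMap.adjoint (E (s ∩ t)) = E (s ∩ t) := by
          have := pvm.selfAdjoint (s ∩ t) hwm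
          rwa [IsSelfAdjoint, ContinuousLinearMap.star_eq_adjoint] at this
        have hnorm : (inner ℂ (E (s ∩ t) (V h)) (E (s ∩ t) (V h)) : ℂ) = 0 := by
          calc (inner ℂ (E (s ∩ t) (V h)) (E (s ∩ t) (V h)) : ℂ)
              = inner ℂ (V h) (ContinuousLinearMap.adjoint (E (s ∩ t)) (E (s ∩ t) (V h))) := by
                rw [ContinuousLinearMap.adjoint_inner_right]
            _ = inner ℂ (V h) (E (s ∩ t) (E (s ∩ t) (V h))) := by rw [hsa]
            _ = inner ℂ (V h) (E (s ∩ t) (V h)) := by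
                rw [show E (s ∩ t) (E (s ∩ t) (V h)) = (E (s ∩ t) * E (s ∩ t)) (V h) from rfl,
                  pvm.idempotent _ hwm]
            _ = inner ℂ h (J.toFun (s ∩ t) 1 h) := by
                rw [hdilation (s ∩ t) 1 hwm]
                simp only [ContinuousLinearMap.coe_comp', Function.comp_apply,
                  ContinuousLinearMap.adjoint_inner_right]
                congr 1
                simp [ContinuousLinearMap.mul_apply]
            _ = 0 := hx0
        exact inner_self_eq_zero.mp hnorm
      have hker : ∀ y ∈ {y : K | ∃ (b : A) (t : Set X) (h : H),
          MeasurableSet t ∧ y = π b (E t (V h))}, (π a * E s) y = 0 := by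
        rintro y ⟨b, t, h, ht, rfl⟩
        have hc : E s (π b (E t (V h))) = π b (E s (E t (V h))) := by
          have h1 := hcomm s b hs
          calc E s (π b (E t (V h))) = (E s * π b) (E t (V h)) := rfl
            _ = (π b * E s) (E t (V h)) := by rw [h1]
            _ = π b (E s (E t (V h))) := rfl
        have hEE : E s (E t (V h)) = E (s ∩ t) (V h) := by
          rw [show E s (E t (V h)) = (E s * E t) (V h) from rfl, hE_inter s t hs ht]
        show π a (E s (π b (E t (V h)))) = 0
        rw [hc, hEE, key t ht h, map_zero, map_zero]
      have hsub : Submodule.span ℂ {y : K | ∃ (b : A) (t : Set X) (h : H),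
          MeasurableSet t ∧ y = π b (E t (V h))} ≤ LinearMap.ker (π a * E s) :=
        Submodule.span_le.mpr fun y hy => LinearMap.mem_ker.mpr (by exact hker y hy)
      have hcl := Submodule.topologicalClosure_minimal _ hsub
        (ContinuousLinearMap.isClosed_ker (π a * E s))
      rw [hmin] at hcl
      ext y
      exact LinearMap.mem_ker.mp (hcl (Submodule.mem_top (x := y)))
    · intro hE
      apply LinearMap.ext; intro a
      rw [hdilation s a hs, hE a]
      simp
  refine ⟨main, ?_, ?_⟩
  · intro hcon s a hs
    have hJempty : J.toFun (∅ : Set X) = 0 := by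
      apply LinearMap.ext; intro a'
      ext k; apply ext_inner_left ℂ; intro h
      simp only [LinearMap.zero_apply, ContinuousLinearMap.zero_apply, inner_zero_right]
      exact countadd_empty_pair (fun t => (inner ℂ h (J.toFun t a' k) : ℂ))
        (J.countably_additive a' h k)
    have h0 : J.toFun (s \ S) = 0 := by
      have h1 := hcon (s \ S) (hs.diff hS)
      rwa [Set.diff_inter_self, hJempty] at h1
    have hpiE := (main (s \ S) (hs.diff hS)).mp h0 a
    have hEs : E s = E (s ∩ S) + E (s \ S) := by
      rw [← hE_add _ _ (hs.inter hS) (hs.diff hS)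
        (disjoint_sdiff_self_right.mono_left Set.inter_subset_right),
        Set.inter_union_diff]
    rw [hEs, mul_add, hpiE, add_zero]
  · intro hpi s hs
    apply LinearMap.ext; intro a
    rw [hdilation s a hs, hdilation (s ∩ S) a (hs.inter hS), hpi s a hs]
end
end

section
/- Let ℐ : 𝒪(X) → CP(𝒜, B(ℋ)) be a CP instrument with minimal bi-dilation quadruple (𝒦, π, E, V). Then ℐ is pure (i.e. every CP instrument 𝒥 : 𝒪(X) → CP(𝒜, B(ℋ)) dominated by ℐ is of the form 𝒥 = tℐ for some t ∈ [0,1]) if and only if the spectral instrument πE is irreducible, i.e. {π(a)E(A) : a ∈ 𝒜, A ∈ 𝒪(X)}′ = ℂ·I_𝒦. -/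
open scoped InnerProductSpace ComplexOrder
open Function

noncomputable section

section Aux

section CA
variable {X : Type*} [MeasurableSpace X]

/-- abstract countable additivity property for a complex set function -/
def IsCA (m : Set X → ℂ) : Prop :=
  ∀ s : ℕ → Set X, (∀ n, MeasurableSet (s n)) → Pairwise (Disjoint on s) →
    HasSum (fun n => m (s n)) (m (⋃ n, s n))

theorem IsCA.empty {m : Set X → ℂ} (hm : IsCA m) : m ∅ = 0 := by
  have h := hm (fun _ => (∅ : Set X)) (fun _ => MeasurableSet.empty)
    (by intro i j _; simp [Function.onFun])
  simp only [Set.iUnion_empty] at h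
  have hs : Filter.Tendsto (fun _ : ℕ => m ∅) Filter.atTop (nhds 0) :=
    h.summable.tendsto_atTop_zero
  exact tendsto_nhds_unique tendsto_const_nhds hs

theorem IsCA.union₂ {m : Set X → ℂ} (hm : IsCA m) {s t : Set X}
    (hs : MeasurableSet s) (ht : MeasurableSet t) (hdisj : Disjoint s t) :
    m (s ∪ t) = m s + m t := by
  classical
  set f : ℕ → Set X := fun n => if n = 0 then s else if n = 1 then t else ∅ with hf
  have hmeas : ∀ n, MeasurableSet (f n) := by
    intro n; simp only [hf]; split_ifs <;> simp [hs, ht]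
  have hdis : Pairwise (Disjoint on f) := by
    intro i j hij
    simp only [Function.onFun, hf]
    split_ifs with h1 h2 h3 h4 h5 <;>
      simp_all [hdisj, hdisj.symm]
  have hU : (⋃ n, f n) = s ∪ t := by
    apply Set.Subset.antisymm
    · refine Set.iUnion_subset fun n => ?_
      simp only [hf]; split_ifs <;> simp
    · intro x hx
      rcases hx with hx | hx
      · exact Set.mem_iUnion.2 ⟨0, by simp [hf, hx]⟩
      · exact Set.mem_iUnion.2 ⟨1, by simp [hf, hx]⟩
  have h1 := hm f hmeas hdis
  rw [hU] at h1
  have h2 : HasSum (fun n => m (f n)) (∑ n ∈ ({0, 1} : Finset ℕ), m (f n)) := by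
    apply hasSum_sum_of_ne_finset_zero
    intro n hn
    simp only [Finset.mem_insert, Finset.mem_singleton, not_or] at hn
    simp only [hf, if_neg hn.1, if_neg hn.2]
    exact hm.empty
  have := h1.unique h2
  rw [this]
  norm_num [hf]

theorem IsCA.biUnion_finset {m : Set X → ℂ} (hm : IsCA m) {ι : Type*} (t : Finset ι)
    (g : ι → Set X) (hmeas : ∀ p ∈ t, MeasurableSet (g p))
    (hdisj : ∀ p ∈ t, ∀ q ∈ t, p ≠ q → Disjoint (g p) (g q)) :
    m (⋃ p ∈ t, g p) = ∑ p ∈ t, m (g p) := by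
  classical
  revert hmeas hdisj
  induction t using Finset.induction_on with
  | empty => intro _ _; simpa using hm.empty
  | @insert a u hnotmem ih =>
    intro hmeas hdisj
    rw [Finset.sum_insert hnotmem, Finset.set_biUnion_insert]
    rw [hm.union₂ (hmeas a (Finset.mem_insert_self a u))
      (u.measurableSet_biUnion fun p hp => hmeas p (Finset.mem_insert_of_mem hp))
      (by
        refine Set.disjoint_iUnion₂_right.2 fun p hp => ?_
        exact hdisj a (Finset.mem_insert_self a u) p (Finset.mem_insert_of_mem hp)
          (fun h => hnotmem (h ▸ hp)))]
    rw [ih (fun p hp => hmeas p (Finset.mem_insert_of_mem hp))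
      (fun p hp q hq => hdisj p (Finset.mem_insert_of_mem hp) q (Finset.mem_insert_of_mem hq))]
end CA

section Form
variable {M : Type*} [AddCommGroup M] [Module ℂ M]

/-- positive sesquilinear forms are hermitian -/
theorem herm_of_psd (B : M → M → ℂ)
    (haddl : ∀ x y z, B (x + y) z = B x z + B y z)
    (haddr : ∀ x y z, B x (y + z) = B x y + B x z)
    (hsmull : ∀ (c : ℂ) x y, B (c • x) y = starRingEnd ℂ c * B x y)
    (hsmulr : ∀ (c : ℂ) x y, B x (c • y) = c * B x y)
    (hpos : ∀ x, 0 ≤ B x x) :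
    ∀ x y, B y x = starRingEnd ℂ (B x y) := by
  have hreal : ∀ x, (B x x).im = 0 := fun x => ((Complex.nonneg_iff.1 (hpos x)).2).symm
  intro x y
  have h1 : (B (x + y) (x + y)).im = 0 := hreal _
  have h2 : (B (x + Complex.I • y) (x + Complex.I • y)).im = 0 := hreal _
  simp only [haddl, haddr, hsmull, hsmulr] at h1 h2
  simp only [Complex.add_im, hreal x, hreal y, Complex.mul_im, Complex.mul_re,
    Complex.conj_re, Complex.conj_im, Complex.I_re, Complex.I_im] at h1 h2
  apply Complex.ext
  · simp only [Complex.conj_re]; nlinarith [h2]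
  · simp only [Complex.conj_im]; nlinarith [h1]

theorem cs_of_psd (B : M → M → ℂ)
    (haddl : ∀ x y z, B (x + y) z = B x z + B y z)
    (haddr : ∀ x y z, B x (y + z) = B x y + B x z)
    (hsmull : ∀ (c : ℂ) x y, B (c • x) y = starRingEnd ℂ c * B x y)
    (hsmulr : ∀ (c : ℂ) x y, B x (c • y) = c * B x y)
    (hpos : ∀ x, 0 ≤ B x x) :
    ∀ x y, ‖B x y‖ ^ 2 ≤ (B x x).re * (B y y).re := by
  intro x y
  set βx := (B x x).re with hβx
  set βy := (B y y).re with hβy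
  have hβx0 : 0 ≤ βx := (Complex.nonneg_iff.1 (hpos x)).1
  have hβy0 : 0 ≤ βy := (Complex.nonneg_iff.1 (hpos y)).1
  by_cases hu : B x y = 0
  · simpa [hu] using mul_nonneg hβx0 hβy0
  have herm := herm_of_psd B haddl haddr hsmull hsmulr hpos x y
  have hreal : ∀ z, (B z z).im = 0 := fun z => ((Complex.nonneg_iff.1 (hpos z)).2).symm
  have hBxx : B x x = ((βx : ℝ) : ℂ) := Complex.ext (by simp [hβx]) (by simp [hreal x])
  have hByy : B y y = ((βy : ℝ) : ℂ) := Complex.ext (by simp [hβy]) (by simp [hreal y])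
  have huu : B x y * starRingEnd ℂ (B x y) = ((‖B x y‖ : ℂ)) ^ 2 := by
    rw [Complex.mul_conj, Complex.normSq_eq_norm_sq]
    push_cast; ring
  have key : ∀ r : ℝ, 0 ≤ (‖B x y‖ ^ 2 * βy) * (r * r) + (2 * ‖B x y‖ ^ 2) * r + βx := by
    intro r
    have hval := hpos (x + ((r : ℂ) * starRingEnd ℂ (B x y)) • y)
    simp only [haddl, haddr, hsmull, hsmulr] at hval
    rw [herm] at hval
    have hexpr : B x x + (r : ℂ) * starRingEnd ℂ (B x y) * B x y +
        (starRingEnd ℂ ((r : ℂ) * starRingEnd ℂ (B x y)) * starRingEnd ℂ (B x y) +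
          starRingEnd ℂ ((r : ℂ) * starRingEnd ℂ (B x y)) *
            ((r : ℂ) * starRingEnd ℂ (B x y) * B y y))
        = ((((‖B x y‖ ^ 2 * βy) * (r * r) + (2 * ‖B x y‖ ^ 2) * r + βx : ℝ)) : ℂ) := by
      simp only [map_mul, Complex.conj_conj, Complex.conj_ofReal]
      rw [hBxx, hByy]
      push_cast
      linear_combination ((r : ℂ) + r + r * r * (βy : ℂ)) * huu
    rw [hexpr] at hval
    exact_mod_cast Complex.zero_le_real.1 hval
  have hd := discrim_le_zero key
  simp only [discrim] at hd
  have hne : B x y ≠ 0 := hu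
  have hupos : 0 < ‖B x y‖ ^ 2 := pow_pos (norm_pos_iff.mpr hne) 2
  nlinarith [hd, hupos]
end Form

end Aux

section PVMFacts
variable {X K : Type*} [MeasurableSpace X] [NormedAddCommGroup K]
  [InnerProductSpace ℂ K] [CompleteSpace K] {E : Set X → K →L[ℂ] K}

theorem ext_inner_op {K' : Type*} [NormedAddCommGroup K'] [InnerProductSpace ℂ K']
    {W₁ W₂ : K' →L[ℂ] K'} (h : ∀ v w : K', (inner ℂ v (W₁ w) : ℂ) = inner ℂ v (W₂ w)) :
    W₁ = W₂ :=
  ContinuousLinearMap.ext fun w => ext_inner_left ℂ fun v => h v w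

theorem IsPVM.inner_isCA (hE : IsPVM E) (h k : K) :
    IsCA (fun s => (inner ℂ h (E s k) : ℂ)) :=
  fun s hs hd => hE.countably_additive h k s hs hd

theorem IsPVM.add_disjoint (hE : IsPVM E) {s t : Set X} (hs : MeasurableSet s)
    (ht : MeasurableSet t) (hd : Disjoint s t) : E (s ∪ t) = E s + E t := by
  apply ext_inner_op
  intro v w
  have := (hE.inner_isCA v w).union₂ hs ht hd
  simpa [inner_add_right] using this

theorem IsPVM.orth (hE : IsPVM E) {s t : Set X} (hs : MeasurableSet s)
    (ht : MeasurableSet t) (hd : Disjoint s t) : E s * E t = 0 := by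
  have hu : E (s ∪ t) = E s + E t := hE.add_disjoint hs ht hd
  have hid := hE.idempotent (s ∪ t) (hs.union ht)
  rw [hu] at hid
  have hids := hE.idempotent s hs
  have hidt := hE.idempotent t ht
  have hsum : E s * E t + E t * E s = 0 := by
    have := hid
    rw [add_mul, mul_add, mul_add, hids, hidt] at this
    have h3 : E s + E t + (E s * E t + E t * E s) = E s + E t := by
      conv_rhs => rw [← this]
      abel
    exact add_eq_left.mp h3
  have hAB : E s * E t = -(E t * E s) := eq_neg_of_add_eq_zero_left hsum
  have hBA : E t * E s = -(E s * E t) := eq_neg_of_add_eq_zero_right hsum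
  have e1 : E s * (E t * E s) = -(E s * E t) := by
    rw [hBA, mul_neg, ← mul_assoc, hids]
  have e2 : E s * E t * E s = E s * E t := by
    calc E s * E t * E s = -(E t * E s) * E s := by rw [hAB]
    _ = -(E t * (E s * E s)) := by rw [neg_mul, mul_assoc]
    _ = -(E t * E s) := by rw [hids]
    _ = E s * E t := hAB.symm
  have e4 : -(E s * E t) = E s * E t := by
    rw [← e1, ← mul_assoc]
    exact e2
  have e5 : (2 : ℂ) • (E s * E t) = 0 := by
    rw [two_smul]
    nth_rewrite 1 [← e4]
    abel
  have := smul_eq_zero.mp e5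
  rcases this with h | h
  · exact absurd h (by norm_num)
  · exact h

theorem IsPVM.mul_inter (hE : IsPVM E) {s t : Set X} (hs : MeasurableSet s)
    (ht : MeasurableSet t) : E s * E t = E (s ∩ t) := by
  have hsplit_s : E s = E (s ∩ t) + E (s \ t) := by
    rw [← hE.add_disjoint (hs.inter ht) (hs.diff ht)
      (Set.disjoint_left.2 fun x hx hx' => hx'.2 hx.2), Set.inter_union_diff]
  have hsplit_t : E t = E (s ∩ t) + E (t \ s) := by
    rw [← hE.add_disjoint (hs.inter ht) (ht.diff hs)
      (Set.disjoint_left.2 fun x hx hx' => hx'.2 hx.1), Set.inter_comm,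
      Set.inter_union_diff]
  rw [hsplit_s, hsplit_t, add_mul, mul_add, mul_add,
    hE.idempotent _ (hs.inter ht),
    hE.orth (hs.inter ht) (ht.diff hs) (Set.disjoint_left.2 fun x hx hx' => hx'.2 hx.1),
    hE.orth (hs.diff ht) (hs.inter ht) (Set.disjoint_left.2 fun x hx hx' => hx.2 hx'.2),
    hE.orth (hs.diff ht) (ht.diff hs) (Set.disjoint_left.2 fun x hx hx' => hx'.2 hx.1)]
  simp
end PVMFacts

section Dilation
variable {X A H K : Type*} [MeasurableSpace X]
    [NormedRing A] [StarRing A] [NormedAlgebra ℂ A]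
    [NormedAddCommGroup H] [InnerProductSpace ℂ H] [CompleteSpace H]
    [NormedAddCommGroup K] [InnerProductSpace ℂ K] [CompleteSpace K]

/-- index type for generating vectors of the dilation space -/
def dilVec (π : A →⋆ₐ[ℂ] (K →L[ℂ] K)) (E : Set X → K →L[ℂ] K) (V : H →L[ℂ] K) :
    (A × {s : Set X // MeasurableSet s} × H) → K :=
  fun p => π p.1 (E p.2.1.1 (V p.2.2))

variable {J : CPInstrument X A H} {π : A →⋆ₐ[ℂ] (K →L[ℂ] K)}
  {E : Set X → K →L[ℂ] K} {V : H →L[ℂ] K}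

theorem adjoint_pi (a : A) : ContinuousLinearMap.adjoint (π a) = π (star a) := by
  rw [← ContinuousLinearMap.star_eq_adjoint, ← map_star]

theorem adjoint_E (hdil : IsMinimalBiDilation J π E V) {s : Set X} (hs : MeasurableSet s) :
    ContinuousLinearMap.adjoint (E s) = E s := by
  rw [← ContinuousLinearMap.star_eq_adjoint]
  exact hdil.pvm.selfAdjoint s hs

theorem genSet_eq (hdil : IsMinimalBiDilation J π E V) :
    {y : K | ∃ (a : A) (s : Set X) (h : H), MeasurableSet s ∧ y = π a (E s (V h))}
      = Set.range (dilVec π E V) := by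
  ext y
  constructor
  · rintro ⟨a, s, h, hs, rfl⟩
    exact ⟨(a, ⟨s, hs⟩, h), rfl⟩
  · rintro ⟨⟨a, ⟨s, hs⟩, h⟩, rfl⟩
    exact ⟨a, s, h, hs, rfl⟩

theorem dil_dense (hdil : IsMinimalBiDilation J π E V) :
    Dense ((Submodule.span ℂ (Set.range (dilVec π E V)) : Submodule ℂ K) : Set K) := by
  rw [Submodule.dense_iff_topologicalClosure_eq_top, ← genSet_eq hdil]
  exact hdil.minimal

theorem eq_zero_of_inner_dilVec (hdil : IsMinimalBiDilation J π E V) {w : K}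
    (h : ∀ p, (inner ℂ (dilVec π E V p) w : ℂ) = 0) : w = 0 := by
  have hspan : ∀ ζ ∈ Submodule.span ℂ (Set.range (dilVec π E V)),
      (inner ℂ ζ w : ℂ) = 0 := by
    intro ζ hζ
    induction hζ using Submodule.span_induction with
    | mem x hx => obtain ⟨p, rfl⟩ := hx; exact h p
    | zero => simp
    | add x y _ _ hx hy => rw [inner_add_left, hx, hy, add_zero]
    | smul c x _ hx => rw [inner_smul_left, hx, mul_zero]
  have hfun : (fun ζ : K => (inner ℂ ζ w : ℂ)) = fun _ => 0 := by
    apply Continuous.ext_on (dil_dense hdil)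
    · exact continuous_id.inner continuous_const
    · exact continuous_const
    · intro ζ hζ; exact hspan ζ hζ
  have := congrFun hfun w
  simpa [inner_self_eq_zero] using this

theorem ext_of_dilVec (hdil : IsMinimalBiDilation J π E V) {W₁ W₂ : K →L[ℂ] K}
    (h : ∀ p q, (inner ℂ (dilVec π E V q) (W₁ (dilVec π E V p)) : ℂ)
      = inner ℂ (dilVec π E V q) (W₂ (dilVec π E V p))) : W₁ = W₂ := by
  have hgen : ∀ p, W₁ (dilVec π E V p) = W₂ (dilVec π E V p) := by
    intro p
    have : ∀ q, (inner ℂ (dilVec π E V q) (W₁ (dilVec π E V p) - W₂ (dilVec π E V p)) : ℂ) = 0 := by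
      intro q; rw [inner_sub_right, h p q, sub_self]
    have := eq_zero_of_inner_dilVec hdil this
    exact sub_eq_zero.mp this
  have hspan : ∀ ζ ∈ Submodule.span ℂ (Set.range (dilVec π E V)), W₁ ζ = W₂ ζ := by
    intro ζ hζ
    induction hζ using Submodule.span_induction with
    | mem x hx => obtain ⟨p, rfl⟩ := hx; exact hgen p
    | zero => simp
    | add x y _ _ hx hy => rw [map_add, map_add, hx, hy]
    | smul c x _ hx => rw [map_smul, map_smul, hx]
  have hfun : (W₁ : K → K) = W₂ := by
    apply Continuous.ext_on (dil_dense hdil) W₁.continuous W₂.continuous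
    intro ζ hζ; exact hspan ζ hζ
  exact ContinuousLinearMap.ext fun ζ => congrFun hfun ζ

theorem pi_apply_dilVec (a : A) (p : A × {s : Set X // MeasurableSet s} × H) :
    π a (dilVec π E V p) = dilVec π E V (a * p.1, p.2) := by
  simp only [dilVec, map_mul, ContinuousLinearMap.mul_apply]

theorem E_apply_dilVec (hdil : IsMinimalBiDilation J π E V) {s : Set X} (hs : MeasurableSet s)
    (p : A × {s : Set X // MeasurableSet s} × H) :
    E s (dilVec π E V p) = dilVec π E V (p.1, ⟨s ∩ p.2.1.1, hs.inter p.2.1.2⟩, p.2.2) := by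
  simp only [dilVec]
  have h1 : E s * π p.1 = π p.1 * E s := hdil.commutes s p.1 hs
  have h2 : E s * E p.2.1.1 = E (s ∩ p.2.1.1) := hdil.pvm.mul_inter hs p.2.1.2
  calc E s (π p.1 (E p.2.1.1 (V p.2.2))) = (E s * π p.1) (E p.2.1.1 (V p.2.2)) := rfl
  _ = (π p.1 * E s) (E p.2.1.1 (V p.2.2)) := by rw [h1]
  _ = π p.1 ((E s * E p.2.1.1) (V p.2.2)) := rfl
  _ = π p.1 (E (s ∩ p.2.1.1) (V p.2.2)) := by rw [h2]

theorem inner_dilVec_dilVec (hdil : IsMinimalBiDilation J π E V)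
    (p q : A × {s : Set X // MeasurableSet s} × H) :
    (inner ℂ (dilVec π E V q) (dilVec π E V p) : ℂ)
      = inner ℂ q.2.2 ((J.toFun (q.2.1.1 ∩ p.2.1.1) (star q.1 * p.1)) p.2.2) := by
  obtain ⟨b, ⟨u, hu⟩, k⟩ := q
  obtain ⟨a, ⟨s, hs⟩, h⟩ := p
  simp only [dilVec]
  have h1 : π b (E u (V k)) = ContinuousLinearMap.adjoint (π (star b)) (E u (V k)) := by
    rw [adjoint_pi, star_star]
  rw [h1, ContinuousLinearMap.adjoint_inner_left]
  have h2 : π (star b) (π a (E s (V h))) = π (star b * a) (E s (V h)) := by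
    simp only [map_mul, ContinuousLinearMap.mul_apply]
  rw [h2]
  have h3 : E u (V k) = ContinuousLinearMap.adjoint (E u) (V k) := by
    rw [adjoint_E hdil hu]
  rw [h3, ContinuousLinearMap.adjoint_inner_left]
  have h4 : E u (π (star b * a) (E s (V h)))
      = π (star b * a) (E (u ∩ s) (V h)) := by
    have := E_apply_dilVec hdil hu (star b * a, ⟨s, hs⟩, h)
    simpa [dilVec] using this
  rw [h4]
  have h5 : J.toFun (u ∩ s) (star b * a)
      = (ContinuousLinearMap.adjoint V).comp ((π (star b * a) * E (u ∩ s)).comp V) :=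
    hdil.dilation (u ∩ s) (star b * a) (hu.inter hs)
  rw [h5]
  simp only [ContinuousLinearMap.comp_apply, ContinuousLinearMap.mul_apply]
  rw [ContinuousLinearMap.adjoint_inner_right]
end Dilation

section FamilyPos
variable {X A H : Type*} [MeasurableSpace X] [NormedRing A] [StarRing A]
    [NormedAlgebra ℂ A] [NormedAddCommGroup H] [InnerProductSpace ℂ H]

/-- countable additivity of all matrix-element pairings of an instrument-like map -/
def PairCA (Ψ : Set X → A →ₗ[ℂ] (H →L[ℂ] H)) : Prop :=
  ∀ (a : A) (h k : H), IsCA (fun s => (inner ℂ h ((Ψ s a) k) : ℂ))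

theorem cp_finset {φ : A →ₗ[ℂ] (H →L[ℂ] H)} (hφ : IsCompletelyPositive φ)
    {ι : Type*} (t : Finset ι) (a : ι → A) (h : ι → H) :
    0 ≤ ∑ p ∈ t, ∑ q ∈ t, (inner ℂ (h p) ((φ (star (a p) * a q)) (h q)) : ℂ) := by
  classical
  have key := hφ t.card (fun i => a (t.equivFin.symm i)) (fun i => h (t.equivFin.symm i))
  have e1 : ∀ f : ι → ℂ, ∑ i : Fin t.card, f ((t.equivFin.symm i) : ι) = ∑ p ∈ t, f p := by
    intro f
    rw [Equiv.sum_comp t.equivFin.symm (fun x : {x // x ∈ t} => f x)]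
    exact Finset.sum_coe_sort t f
  calc (0 : ℂ) ≤ ∑ i, ∑ j, (inner ℂ (h (t.equivFin.symm i))
      ((φ (star (a (t.equivFin.symm i)) * a (t.equivFin.symm j))) (h (t.equivFin.symm j))) : ℂ) := key
  _ = ∑ p ∈ t, ∑ q ∈ t, (inner ℂ (h p) ((φ (star (a p) * a q)) (h q)) : ℂ) := by
      rw [← e1 (fun p => ∑ q ∈ t, (inner ℂ (h p) ((φ (star (a p) * a q)) (h q)) : ℂ))]
      congr 1
      funext i
      exact e1 (fun q => (inner ℂ (h (t.equivFin.symm i)) ((φ (star (a (t.equivFin.symm i)) * a q)) (h q)) : ℂ))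

theorem family_pos {Ψ : Set X → A →ₗ[ℂ] (H →L[ℂ] H)}
    (hCP : ∀ s, MeasurableSet s → IsCompletelyPositive (Ψ s)) (hCA : PairCA Ψ)
    {ι : Type*} (t : Finset ι) (a : ι → A) (sets : ι → Set X)
    (hmeas : ∀ p ∈ t, MeasurableSet (sets p)) (h : ι → H) :
    0 ≤ ∑ p ∈ t, ∑ q ∈ t,
      (inner ℂ (h p) ((Ψ (sets p ∩ sets q) (star (a p) * a q)) (h q)) : ℂ) := by
  classical
  set atom : Finset ι → Set X :=
    fun u => (⋂ p ∈ u, sets p) ∩ (⋂ p ∈ t \ u, (sets p)ᶜ) with hatom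
  have hatom_meas : ∀ u ∈ t.powerset, MeasurableSet (atom u) := by
    intro u hu
    rw [Finset.mem_powerset] at hu
    exact ((u.measurableSet_biInter (fun p hp => hmeas p (hu hp)))).inter
      ((t \ u).measurableSet_biInter (fun p hp => (hmeas p (Finset.mem_sdiff.1 hp).1).compl))
  have hatom_disj : ∀ u ∈ t.powerset, ∀ w ∈ t.powerset, u ≠ w → Disjoint (atom u) (atom w) := by
    intro u hu w hw hne
    rw [Finset.mem_powerset] at hu hw
    have hex : ∃ p, (p ∈ u ∧ p ∉ w) ∨ (p ∈ w ∧ p ∉ u) := by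
      by_contra hc
      push_neg at hc
      exact hne (Finset.ext fun p => ⟨(hc p).1, (hc p).2⟩)
    obtain ⟨p, hp⟩ := hex
    rw [Set.disjoint_left]
    intro x hxu hxw
    obtain ⟨hxu1, hxu2⟩ := hxu
    obtain ⟨hxw1, hxw2⟩ := hxw
    rcases hp with ⟨hpu, hpw⟩ | ⟨hpw, hpu⟩
    · exact (Set.mem_iInter₂.1 hxw2 p (Finset.mem_sdiff.2 ⟨hu hpu, hpw⟩))
        (Set.mem_iInter₂.1 hxu1 p hpu)
    · exact (Set.mem_iInter₂.1 hxu2 p (Finset.mem_sdiff.2 ⟨hw hpw, hpu⟩))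
        (Set.mem_iInter₂.1 hxw1 p hpw)
  have cover : ∀ p ∈ t, ∀ q ∈ t, sets p ∩ sets q
      = ⋃ u ∈ t.powerset, (if p ∈ u ∧ q ∈ u then atom u else ∅) := by
    intro p hp q hq
    ext x
    constructor
    · intro hx
      set u := t.filter (fun r => x ∈ sets r) with hu
      have hus : u ∈ t.powerset := Finset.mem_powerset.2 (Finset.filter_subset _ _)
      have hpu : p ∈ u := Finset.mem_filter.2 ⟨hp, hx.1⟩
      have hqu : q ∈ u := Finset.mem_filter.2 ⟨hq, hx.2⟩
      refine Set.mem_biUnion hus ?_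
      rw [if_pos ⟨hpu, hqu⟩]
      refine ⟨Set.mem_iInter₂.2 fun r hr => (Finset.mem_filter.1 hr).2,
        Set.mem_iInter₂.2 fun r hr hxr => (Finset.mem_sdiff.1 hr).2
          (Finset.mem_filter.2 ⟨(Finset.mem_sdiff.1 hr).1, hxr⟩)⟩
    · intro hx
      obtain ⟨u, hu, hxu⟩ := Set.mem_iUnion₂.1 hx
      by_cases hc : p ∈ u ∧ q ∈ u
      · rw [if_pos hc] at hxu
        exact ⟨Set.mem_iInter₂.1 hxu.1 p hc.1, Set.mem_iInter₂.1 hxu.1 q hc.2⟩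
      · rw [if_neg hc] at hxu
        exact absurd hxu (Set.notMem_empty x)
  have hsum1 : ∀ p ∈ t, ∀ q ∈ t,
      (inner ℂ (h p) ((Ψ (sets p ∩ sets q) (star (a p) * a q)) (h q)) : ℂ)
      = ∑ u ∈ t.powerset,
          (inner ℂ (h p) ((Ψ (if p ∈ u ∧ q ∈ u then atom u else ∅) (star (a p) * a q)) (h q)) : ℂ) := by
    intro p hp q hq
    have hca := hCA (star (a p) * a q) (h p) (h q)
    rw [cover p hp q hq]
    refine hca.biUnion_finset t.powerset _ ?_ ?_
    · intro u hu
      by_cases hc : p ∈ u ∧ q ∈ u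
      · rw [if_pos hc]; exact hatom_meas u hu
      · rw [if_neg hc]; exact MeasurableSet.empty
    · intro u hu w hw hne
      by_cases hc1 : p ∈ u ∧ q ∈ u <;> by_cases hc2 : p ∈ w ∧ q ∈ w
      · rw [if_pos hc1, if_pos hc2]; exact hatom_disj u hu w hw hne
      · rw [if_neg hc2]; exact Set.disjoint_empty _
      · rw [if_neg hc1]; exact Set.empty_disjoint _
      · rw [if_neg hc1]; exact Set.empty_disjoint _
  have hterm : ∀ (u : Finset ι) (p q : ι),
      (inner ℂ (if p ∈ u then h p else 0)
        ((Ψ (atom u) (star (a p) * a q)) (if q ∈ u then h q else 0)) : ℂ)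
      = inner ℂ (h p) ((Ψ (if p ∈ u ∧ q ∈ u then atom u else ∅) (star (a p) * a q)) (h q)) := by
    intro u p q
    by_cases hp : p ∈ u <;> by_cases hq : q ∈ u
    · rw [if_pos hp, if_pos hq, if_pos ⟨hp, hq⟩]
    · rw [if_pos hp, if_neg hq, if_neg (fun hc => hq hc.2)]
      rw [(hCA (star (a p) * a q) (h p) (h q)).empty]
      simp
    · rw [if_neg hp, if_pos hq, if_neg (fun hc => hp hc.1)]
      rw [(hCA (star (a p) * a q) (h p) (h q)).empty]
      simp
    · rw [if_neg hp, if_neg hq, if_neg (fun hc => hp hc.1)]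
      rw [(hCA (star (a p) * a q) (h p) (h q)).empty]
      simp
  calc (0 : ℂ) ≤ ∑ u ∈ t.powerset, ∑ p ∈ t, ∑ q ∈ t,
      (inner ℂ (if p ∈ u then h p else 0)
        ((Ψ (atom u) (star (a p) * a q)) (if q ∈ u then h q else 0)) : ℂ) :=
      Finset.sum_nonneg fun u hu =>
        cp_finset (hCP (atom u) (hatom_meas u hu)) t a (fun r => if r ∈ u then h r else 0)
  _ = ∑ u ∈ t.powerset, ∑ p ∈ t, ∑ q ∈ t,
      (inner ℂ (h p) ((Ψ (if p ∈ u ∧ q ∈ u then atom u else ∅) (star (a p) * a q)) (h q)) : ℂ) := by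
      refine Finset.sum_congr rfl fun u _ => Finset.sum_congr rfl fun p _ =>
        Finset.sum_congr rfl fun q _ => hterm u p q
  _ = ∑ p ∈ t, ∑ q ∈ t, ∑ u ∈ t.powerset,
      (inner ℂ (h p) ((Ψ (if p ∈ u ∧ q ∈ u then atom u else ∅) (star (a p) * a q)) (h q)) : ℂ) := by
      rw [Finset.sum_comm]
      exact Finset.sum_congr rfl fun p _ => Finset.sum_comm
  _ = ∑ p ∈ t, ∑ q ∈ t,
      (inner ℂ (h p) ((Ψ (sets p ∩ sets q) (star (a p) * a q)) (h q)) : ℂ) :=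
      Finset.sum_congr rfl fun p hp => Finset.sum_congr rfl fun q hq => (hsum1 p hp q hq).symm
end FamilyPos

section FormB
variable {X A H : Type*} [MeasurableSpace X] [NormedRing A] [StarRing A]
    [NormedAlgebra ℂ A] [NormedAddCommGroup H] [InnerProductSpace ℂ H]

/-- the pairing of two generator triples through an instrument-like map -/
def pairP (Ψ : Set X → A →ₗ[ℂ] (H →L[ℂ] H)) :
    (A × {s : Set X // MeasurableSet s} × H) → (A × {s : Set X // MeasurableSet s} × H) → ℂ :=
  fun q p => inner ℂ q.2.2 ((Ψ (q.2.1.1 ∩ p.2.1.1) (star q.1 * p.1)) p.2.2)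

/-- the sesquilinear form on formal sums of generator triples -/
def formB (Ψ : Set X → A →ₗ[ℂ] (H →L[ℂ] H))
    (x y : (A × {s : Set X // MeasurableSet s} × H) →₀ ℂ) : ℂ :=
  x.sum fun q c => starRingEnd ℂ c * (y.sum fun p d => d * pairP Ψ q p)

variable {Ψ Ψ₁ Ψ₂ : Set X → A →ₗ[ℂ] (H →L[ℂ] H)}
  {x y z : (A × {s : Set X // MeasurableSet s} × H) →₀ ℂ}

theorem formB_add_left : formB Ψ (x + y) z = formB Ψ x z + formB Ψ y z := by
  classical
  unfold formB
  apply Finsupp.sum_add_index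
  · intro q _; simp
  · intro q _ c₁ c₂; rw [map_add, add_mul]

theorem formB_smul_left (c : ℂ) : formB Ψ (c • x) z = starRingEnd ℂ c * formB Ψ x z := by
  classical
  unfold formB
  rw [Finsupp.sum_smul_index (fun q => by simp)]
  rw [Finsupp.mul_sum]
  apply Finsupp.sum_congr
  intro q _
  rw [map_mul]; ring

theorem formB_add_right : formB Ψ x (y + z) = formB Ψ x y + formB Ψ x z := by
  classical
  unfold formB
  rw [← Finsupp.sum_add]
  apply Finsupp.sum_congr
  intro q _
  rw [Finsupp.sum_add_index (fun p _ => by simp) (fun p _ d₁ d₂ => by rw [add_mul])]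
  ring

theorem formB_smul_right (c : ℂ) : formB Ψ x (c • y) = c * formB Ψ x y := by
  classical
  unfold formB
  rw [Finsupp.mul_sum]
  apply Finsupp.sum_congr
  intro q _
  rw [Finsupp.sum_smul_index (fun p => by simp)]
  have h1 : (y.sum fun p d => c * d * pairP Ψ q p) = c * y.sum fun p d => d * pairP Ψ q p := by
    rw [Finsupp.mul_sum]
    apply Finsupp.sum_congr
    intro p _
    ring
  rw [h1]
  ring

theorem formB_sub_left : formB Ψ (x - y) z = formB Ψ x z - formB Ψ y z := by
  have h : x - y = x + (-1 : ℂ) • y := by rw [neg_one_smul]; abel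
  rw [h, formB_add_left, formB_smul_left]
  have : starRingEnd ℂ (-1 : ℂ) = -1 := by simp
  rw [this]
  ring

theorem formB_sub_right : formB Ψ x (y - z) = formB Ψ x y - formB Ψ x z := by
  have h : y - z = y + (-1 : ℂ) • z := by rw [neg_one_smul]; abel
  rw [h, formB_add_right, formB_smul_right]
  ring

theorem formB_single_single (q p : A × {s : Set X // MeasurableSet s} × H) :
    formB Ψ (Finsupp.single q 1) (Finsupp.single p 1) = pairP Ψ q p := by
  classical
  unfold formB
  rw [Finsupp.sum_single_index (by simp)]
  rw [Finsupp.sum_single_index (by simp)]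
  simp

theorem formB_psd (hCP : ∀ s, MeasurableSet s → IsCompletelyPositive (Ψ s))
    (hCA : PairCA Ψ) (x : (A × {s : Set X // MeasurableSet s} × H) →₀ ℂ) :
    0 ≤ formB Ψ x x := by
  classical
  have key := family_pos hCP hCA x.support (fun p => p.1) (fun p => p.2.1.1)
    (fun p _ => p.2.1.2) (fun p => x p • p.2.2)
  have heq : formB Ψ x x = ∑ q ∈ x.support, ∑ p ∈ x.support,
      (inner ℂ (x q • q.2.2) ((Ψ (q.2.1.1 ∩ p.2.1.1) (star q.1 * p.1)) (x p • p.2.2)) : ℂ) := by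
    simp only [formB, Finsupp.sum, pairP]
    refine Finset.sum_congr rfl fun q _ => ?_
    rw [Finset.mul_sum]
    refine Finset.sum_congr rfl fun p _ => ?_
    rw [inner_smul_left, ContinuousLinearMap.map_smul, inner_smul_right]
  rw [heq]
  exact key

theorem formB_sub_psi :
    formB (fun s => Ψ₁ s - Ψ₂ s) x y = formB Ψ₁ x y - formB Ψ₂ x y := by
  classical
  have hpair : ∀ q' p', pairP (fun s => Ψ₁ s - Ψ₂ s) q' p' = pairP Ψ₁ q' p' - pairP Ψ₂ q' p' := by
    intro q' p'
    simp only [pairP, LinearMap.sub_apply, ContinuousLinearMap.sub_apply, inner_sub_right]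
  unfold formB
  rw [← Finsupp.sum_sub]
  apply Finsupp.sum_congr
  intro q _
  have h1 : (y.sum fun p d => d * pairP (fun s => Ψ₁ s - Ψ₂ s) q p)
      = (y.sum fun p d => d * pairP Ψ₁ q p) - (y.sum fun p d => d * pairP Ψ₂ q p) := by
    rw [← Finsupp.sum_sub]
    apply Finsupp.sum_congr
    intro p _
    rw [hpair]
    ring
  rw [h1]
  ring
end FormB

section RN
variable {X A H K : Type*} [MeasurableSpace X]
    [NormedRing A] [StarRing A] [NormedAlgebra ℂ A]
    [NormedAddCommGroup H] [InnerProductSpace ℂ H] [CompleteSpace H]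
    [NormedAddCommGroup K] [InnerProductSpace ℂ K] [CompleteSpace K]
    {J : CPInstrument X A H} {π : A →⋆ₐ[ℂ] (K →L[ℂ] K)}
    {E : Set X → K →L[ℂ] K} {V : H →L[ℂ] K}

theorem exists_weak_op (hdil : IsMinimalBiDilation J π E V) (J' : CPInstrument X A H)
    (hdom : J.Dominates J') :
    ∃ T : K →L[ℂ] K, ∀ q p : A × {s : Set X // MeasurableSet s} × H,
      (inner ℂ (dilVec π E V q) (T (dilVec π E V p)) : ℂ) = pairP J'.toFun q p := by
  classical
  set vec := dilVec π E V with hvec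
  set Φ : ((A × {s : Set X // MeasurableSet s} × H) →₀ ℂ) →ₗ[ℂ] K :=
    Finsupp.linearCombination ℂ vec with hΦdef
  set B' := formB J'.toFun with hB'def
  have hCA' : PairCA J'.toFun := fun a h k s hs hd => J'.countably_additive a h k s hs hd
  have hCAJ : PairCA J.toFun := fun a h k s hs hd => J.countably_additive a h k s hs hd
  have hCAd : PairCA (fun s => J.toFun s - J'.toFun s) := by
    intro a h k s hs hd
    simp only [LinearMap.sub_apply, ContinuousLinearMap.sub_apply, inner_sub_right]
    exact (hCAJ a h k s hs hd).sub (hCA' a h k s hs hd)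
  have hpos' : ∀ x, 0 ≤ B' x x := fun x => formB_psd (fun s hs => J'.cp s hs) hCA' x
  have hposd : ∀ x, 0 ≤ formB (fun s => J.toFun s - J'.toFun s) x x :=
    fun x => formB_psd (fun s hs => hdom s hs) hCAd x
  have hBJ : ∀ x y, formB J.toFun x y = (inner ℂ (Φ x) (Φ y) : ℂ) := by
    intro x y
    rw [hΦdef]
    simp only [Finsupp.linearCombination_apply, Finsupp.sum, formB]
    rw [sum_inner (𝕜 := ℂ)]
    refine Finset.sum_congr rfl fun q _ => ?_
    rw [inner_smul_left, inner_sum]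
    congr 1
    refine Finset.sum_congr rfl fun p _ => ?_
    rw [inner_smul_right, inner_dilVec_dilVec hdil]
    rfl
  have herm := herm_of_psd B' (fun _ _ _ => formB_add_left) (fun _ _ _ => formB_add_right)
    (fun _ _ _ => formB_smul_left _) (fun _ _ _ => formB_smul_right _) hpos'
  have hcs := cs_of_psd B' (fun _ _ _ => formB_add_left) (fun _ _ _ => formB_add_right)
    (fun _ _ _ => formB_smul_left _) (fun _ _ _ => formB_smul_right _) hpos'
  have h0le : ∀ x, 0 ≤ (B' x x).re := fun x => (Complex.nonneg_iff.1 (hpos' x)).1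
  have hle : ∀ x, (B' x x).re ≤ ‖Φ x‖ ^ 2 := by
    intro x
    have h1 := hposd x
    rw [formB_sub_psi] at h1
    have h2 := (Complex.nonneg_iff.1 h1).1
    rw [Complex.sub_re] at h2
    have h3 : (formB J.toFun x x).re = ‖Φ x‖ ^ 2 := by
      rw [hBJ, inner_self_eq_norm_sq_to_K]
      norm_cast
    rw [h3] at h2
    rw [hB'def]
    linarith
  have hbound : ∀ y x, ‖B' y x‖ ≤ ‖Φ y‖ * ‖Φ x‖ := by
    intro y x
    have h1 := hcs y x
    have h2 : (B' y y).re * (B' x x).re ≤ (‖Φ y‖ * ‖Φ x‖) ^ 2 := by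
      rw [mul_pow]
      exact mul_le_mul (hle y) (hle x) (h0le x) (by positivity)
    nlinarith [norm_nonneg (B' y x), mul_nonneg (norm_nonneg (Φ y)) (norm_nonneg (Φ x))]
  have hker : ∀ x, Φ x = 0 → ∀ y, B' y x = 0 := by
    intro x hx y
    have h1 := hcs y x
    have h2 : (B' x x).re ≤ 0 := by
      have := hle x
      rw [hx] at this
      simpa using this
    have h3 : (B' x x).re = 0 := le_antisymm h2 (h0le x)
    rw [h3, mul_zero] at h1
    have h4 : ‖B' y x‖ = 0 := by nlinarith [norm_nonneg (B' y x)]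
    exact norm_eq_zero.mp h4
  have hkerL : ∀ x y, Φ y = 0 → B' y x = 0 := by
    intro x y hy
    rw [herm x y, hker y hy x, map_zero]
  have hwdR : ∀ y x x', Φ x = Φ x' → B' y x = B' y x' := by
    intro y x x' hxx
    have h0 : Φ (x - x') = 0 := by rw [map_sub, hxx, sub_self]
    have := hker (x - x') h0 y
    rw [hB'def, formB_sub_right] at this
    rw [hB'def]
    exact sub_eq_zero.mp this
  have hwdL : ∀ x y y', Φ y = Φ y' → B' y x = B' y' x := by
    intro x y y' hyy
    have h0 : Φ (y - y') = 0 := by rw [map_sub, hyy, sub_self]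
    have := hkerL x (y - y') h0
    rw [hB'def, formB_sub_left] at this
    rw [hB'def]
    exact sub_eq_zero.mp this
  set S : Submodule ℂ K := Submodule.span ℂ (Set.range vec) with hSdef
  have hdense : Dense (S : Set K) := dil_dense hdil
  have hsurj : ∀ ζ : S, ∃ x, Φ x = (ζ : K) := by
    intro ζ
    have h1 : (ζ : K) ∈ LinearMap.range Φ := by
      rw [hΦdef, Finsupp.range_linearCombination]
      exact ζ.2
    exact h1
  choose rep hrep using hsurj
  have huniq : ∀ w w' : K, (∀ g, (inner ℂ (vec g) w : ℂ) = inner ℂ (vec g) w') → w = w' := by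
    intro w w' hw
    have h1 : ∀ g, (inner ℂ (vec g) (w - w') : ℂ) = 0 := by
      intro g
      rw [inner_sub_right, hw, sub_self]
    exact sub_eq_zero.mp (eq_zero_of_inner_dilVec hdil h1)
  have hΦsingle : ∀ g, Φ (Finsupp.single g 1) = vec g := by
    intro g
    rw [hΦdef, Finsupp.linearCombination_single, one_smul]
  have hdr : DenseRange (⇑S.subtypeL) := by
    have h1 : Set.range (⇑S.subtypeL) = (S : Set K) := Subtype.range_val
    unfold DenseRange
    rw [h1]
    exact hdense
  have hui : IsUniformInducing (⇑S.subtypeL) := isometry_subtype_coe.isUniformInducing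
  -- step 1 : for each x, a vector Tx x realizing the functional B' (·) x
  have step1 : ∀ x, ∃ w : K, (∀ y, (inner ℂ (Φ y) w : ℂ) = B' y x) ∧ ‖w‖ ≤ ‖Φ x‖ := by
    intro x
    set gl : S →ₗ[ℂ] ℂ :=
      { toFun := fun ζ => starRingEnd ℂ (B' (rep ζ) x)
        map_add' := by
          intro ζ₁ ζ₂
          show starRingEnd ℂ (B' (rep (ζ₁ + ζ₂)) x)
            = starRingEnd ℂ (B' (rep ζ₁) x) + starRingEnd ℂ (B' (rep ζ₂) x)
          have h1 : Φ (rep ζ₁ + rep ζ₂) = ((ζ₁ + ζ₂ : S) : K) := by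
            rw [map_add, hrep, hrep]; rfl
          have h2 := hwdL x _ _ ((hrep (ζ₁ + ζ₂)).trans h1.symm)
          rw [h2, hB'def, formB_add_left, map_add]
        map_smul' := by
          intro c ζ
          show starRingEnd ℂ (B' (rep (c • ζ)) x)
            = (RingHom.id ℂ) c * starRingEnd ℂ (B' (rep ζ) x)
          have h1 : Φ (c • rep ζ) = ((c • ζ : S) : K) := by
            rw [map_smul, hrep]; rfl
          have h2 := hwdL x _ _ ((hrep (c • ζ)).trans h1.symm)
          rw [h2, hB'def, formB_smul_left, map_mul, Complex.conj_conj]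
          rfl } with hgl
    have hglb : ∀ ζ : S, ‖gl ζ‖ ≤ ‖Φ x‖ * ‖ζ‖ := by
      intro ζ
      have h1 : ‖gl ζ‖ = ‖B' (rep ζ) x‖ := RCLike.norm_conj _
      rw [h1, Submodule.coe_norm, ← hrep ζ]
      rw [mul_comm]
      exact hbound (rep ζ) x
    set glC := gl.mkContinuous (‖Φ x‖) hglb with hglC
    set gK := glC.extend S.subtypeL with hgK
    refine ⟨(InnerProductSpace.toDual ℂ K).symm gK, ?_, ?_⟩
    · intro y
      have hmem : Φ y ∈ S := by
        rw [hSdef, ← Finsupp.range_linearCombination ℂ (v := vec)]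
        exact ⟨y, rfl⟩
      have h1 : (inner ℂ ((InnerProductSpace.toDual ℂ K).symm gK) (Φ y) : ℂ) = gK (Φ y) :=
        InnerProductSpace.toDual_symm_apply
      have h2 : gK (Φ y) = glC ⟨Φ y, hmem⟩ := by
        have := ContinuousLinearMap.extend_eq (f := glC) (e := S.subtypeL) hdr hui ⟨Φ y, hmem⟩
        rw [← hgK] at this
        exact this
      have h3 : glC ⟨Φ y, hmem⟩ = starRingEnd ℂ (B' (rep ⟨Φ y, hmem⟩) x) := rfl
      have h4 : B' (rep ⟨Φ y, hmem⟩) x = B' y x := hwdL x _ _ (hrep ⟨Φ y, hmem⟩)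
      rw [← inner_conj_symm, h1, h2, h3, h4, Complex.conj_conj]
    · have h1 : ‖(InnerProductSpace.toDual ℂ K).symm gK‖ = ‖gK‖ :=
        LinearIsometryEquiv.norm_map _ _
      rw [h1]
      have h2 : ‖gK‖ ≤ ((1 : NNReal) : ℝ) * ‖glC‖ := by
        rw [hgK]
        refine ContinuousLinearMap.opNorm_extend_le (f := glC) (e := S.subtypeL) hdr ?_
        intro ζ
        rw [NNReal.coe_one, one_mul]
        rfl
      have h3 : ‖glC‖ ≤ ‖Φ x‖ := LinearMap.mkContinuous_norm_le gl (norm_nonneg _) hglb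
      rw [NNReal.coe_one, one_mul] at h2
      linarith
  choose Tx hTx1 hTx2 using step1
  have hTsub : ∀ x x', Φ x = Φ x' → Tx x = Tx x' := by
    intro x x' hxx
    refine huniq _ _ fun g => ?_
    rw [← hΦsingle g, hTx1, hTx1]
    exact hwdR _ x x' hxx
  have hTadd : ∀ x x', Tx (x + x') = Tx x + Tx x' := by
    intro x x'
    refine huniq _ _ fun g => ?_
    rw [← hΦsingle g, hTx1, inner_add_right, hTx1, hTx1, hB'def, formB_add_right]
  have hTsmul : ∀ (c : ℂ) x, Tx (c • x) = c • Tx x := by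
    intro c x
    refine huniq _ _ fun g => ?_
    rw [← hΦsingle g, hTx1, inner_smul_right, hTx1, hB'def, formB_smul_right]
  -- step 2 : assemble into a continuous linear operator
  set T0 : S →ₗ[ℂ] K :=
    { toFun := fun ζ => Tx (rep ζ)
      map_add' := by
        intro ζ₁ ζ₂
        show Tx (rep (ζ₁ + ζ₂)) = Tx (rep ζ₁) + Tx (rep ζ₂)
        have h1 : Φ (rep (ζ₁ + ζ₂)) = Φ (rep ζ₁ + rep ζ₂) := by
          rw [map_add, hrep, hrep, hrep]; rfl
        rw [hTsub _ _ h1, hTadd]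
      map_smul' := by
        intro c ζ
        show Tx (rep (c • ζ)) = (RingHom.id ℂ) c • Tx (rep ζ)
        have h1 : Φ (rep (c • ζ)) = Φ (c • rep ζ) := by
          rw [map_smul, hrep, hrep]; rfl
        rw [hTsub _ _ h1, hTsmul]
        rfl } with hT0
  have hT0b : ∀ ζ : S, ‖T0 ζ‖ ≤ 1 * ‖ζ‖ := by
    intro ζ
    rw [one_mul, Submodule.coe_norm, ← hrep ζ]
    exact hTx2 (rep ζ)
  set T0C := T0.mkContinuous 1 hT0b with hT0C
  refine ⟨T0C.extend S.subtypeL, ?_⟩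
  intro q p
  have hmem : vec p ∈ S := Submodule.subset_span (Set.mem_range_self p)
  have h1 : (T0C.extend S.subtypeL) (vec p) = T0C ⟨vec p, hmem⟩ :=
    ContinuousLinearMap.extend_eq (f := T0C) (e := S.subtypeL) hdr hui ⟨vec p, hmem⟩
  have h2 : T0C ⟨vec p, hmem⟩ = Tx (rep ⟨vec p, hmem⟩) := rfl
  have h3 : (inner ℂ (vec q) (Tx (rep ⟨vec p, hmem⟩)) : ℂ)
      = B' (Finsupp.single q 1) (rep ⟨vec p, hmem⟩) := by
    rw [← hΦsingle q, hTx1]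
  have h4 : B' (Finsupp.single q 1) (rep ⟨vec p, hmem⟩)
      = B' (Finsupp.single q 1) (Finsupp.single p 1) := by
    refine hwdR _ _ _ ?_
    rw [hrep, hΦsingle]
  rw [h1, h2, h3, h4, hB'def, formB_single_single]
end RN

section Sandwich
variable {X A H K : Type*} [MeasurableSpace X]
    [NormedRing A] [StarRing A] [NormedAlgebra ℂ A]
    [NormedAddCommGroup H] [InnerProductSpace ℂ H] [CompleteSpace H]
    [NormedAddCommGroup K] [InnerProductSpace ℂ K] [CompleteSpace K]

/-- compression of `π ⊗ E` by an operator `W` on the dilation space -/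
def sandwichInst (π : A →⋆ₐ[ℂ] (K →L[ℂ] K)) (E : Set X → K →L[ℂ] K) (V : H →L[ℂ] K)
    (W : K →L[ℂ] K) : Set X → A →ₗ[ℂ] (H →L[ℂ] H) := fun s =>
  { toFun := fun a => (ContinuousLinearMap.adjoint V).comp ((π a * E s * W).comp V)
    map_add' := by
      intro a b
      simp only [map_add, add_mul, ContinuousLinearMap.add_comp, ContinuousLinearMap.comp_add]
    map_smul' := by
      intro c a
      simp only [map_smul, smul_mul_assoc, ContinuousLinearMap.smul_comp,
        ContinuousLinearMap.comp_smul, RingHom.id_apply] }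

variable {J : CPInstrument X A H} {π : A →⋆ₐ[ℂ] (K →L[ℂ] K)}
  {E : Set X → K →L[ℂ] K} {V : H →L[ℂ] K} {W : K →L[ℂ] K}

theorem sandwich_apply (s : Set X) (a : A) (k : H) :
    (sandwichInst π E V W s a) k
      = (ContinuousLinearMap.adjoint V) (π a (E s (W (V k)))) := rfl

theorem sandwich_pair (s : Set X) (a : A) (h k : H) :
    (inner ℂ h ((sandwichInst π E V W s a) k) : ℂ)
      = inner ℂ (π (star a) (V h)) (E s (W (V k))) := by
  rw [sandwich_apply, ContinuousLinearMap.adjoint_inner_right,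
    ← ContinuousLinearMap.adjoint_inner_left (π a) (E s (W (V k))) (V h), adjoint_pi]

theorem sandwich_CA (hdil : IsMinimalBiDilation J π E V) :
    PairCA (sandwichInst π E V W) := by
  intro a h k seq hm hd
  have h1 := hdil.pvm.countably_additive (π (star a) (V h)) (W (V k)) seq hm hd
  simpa only [sandwich_pair] using h1

theorem sandwich_CP (hdil : IsMinimalBiDilation J π E V)
    (hWπ : ∀ a, π a * W = W * π a)
    (hWE : ∀ s, MeasurableSet s → E s * W = W * E s)
    (hWpos : ∀ x : K, 0 ≤ (inner ℂ x (W x) : ℂ)) :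
    ∀ s, MeasurableSet s → IsCompletelyPositive (sandwichInst π E V W s) := by
  intro s hs n a h
  have hcommj : ∀ b : A, π b * (E s * W) = (E s * W) * π b := by
    intro b
    calc π b * (E s * W) = (π b * E s) * W := by rw [mul_assoc]
    _ = (E s * π b) * W := by rw [hdil.commutes s b hs]
    _ = E s * (π b * W) := by rw [mul_assoc]
    _ = E s * (W * π b) := by rw [hWπ]
    _ = (E s * W) * π b := by rw [mul_assoc]
  have hterm : ∀ i j, (inner ℂ (h i) ((sandwichInst π E V W s (star (a i) * a j)) (h j)) : ℂ)
      = inner ℂ (π (a i) (V (h i))) ((E s * W) (π (a j) (V (h j)))) := by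
    intro i j
    rw [sandwich_apply, ContinuousLinearMap.adjoint_inner_right]
    have h1 : π (star (a i) * a j) (E s (W (V (h j))))
        = π (star (a i)) (π (a j) (E s (W (V (h j))))) := by
      rw [map_mul]; rfl
    rw [h1]
    have h2 : (inner ℂ (V (h i)) (π (star (a i)) (π (a j) (E s (W (V (h j)))))) : ℂ)
        = inner ℂ (π (a i) (V (h i))) (π (a j) (E s (W (V (h j))))) := by
      rw [← adjoint_pi, ContinuousLinearMap.adjoint_inner_right]
    rw [h2]
    have h3 : π (a j) (E s (W (V (h j)))) = (E s * W) (π (a j) (V (h j))) := by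
      have := congrArg (fun M => M (V (h j))) (hcommj (a j))
      simpa using this
    rw [h3]
  calc (0 : ℂ) ≤ inner ℂ (E s (∑ j, π (a j) (V (h j)))) (W (E s (∑ j, π (a j) (V (h j))))) :=
      hWpos _
  _ = ∑ i, ∑ j, (inner ℂ (h i) ((sandwichInst π E V W s (star (a i) * a j)) (h j)) : ℂ) := by
      set ξ := ∑ j, π (a j) (V (h j)) with hξ
      have h4 : (inner ℂ (E s ξ) (W (E s ξ)) : ℂ) = inner ℂ ξ ((E s * W) ξ) := by
        have h5 : E s * (W * E s) = E s * W := by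
          rw [← mul_assoc, hWE s hs, mul_assoc, hdil.pvm.idempotent s hs, ← hWE s hs]
        calc (inner ℂ (E s ξ) (W (E s ξ)) : ℂ)
            = inner ℂ ξ (ContinuousLinearMap.adjoint (E s) (W (E s ξ))) := by
              rw [ContinuousLinearMap.adjoint_inner_right]
        _ = inner ℂ ξ (E s (W (E s ξ))) := by rw [adjoint_E hdil hs]
        _ = inner ℂ ξ ((E s * (W * E s)) ξ) := rfl
        _ = inner ℂ ξ ((E s * W) ξ) := by rw [h5]
      rw [h4]
      have h6 : (E s * W) ξ = ∑ j, (E s * W) (π (a j) (V (h j))) := by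
        rw [hξ, map_sum]
      rw [hξ, sum_inner, h6]
      refine Finset.sum_congr rfl fun i _ => ?_
      rw [inner_sum]
      refine Finset.sum_congr rfl fun j _ => ?_
      rw [hterm i j]

theorem inner_dilVec_W (hdil : IsMinimalBiDilation J π E V)
    (hWπ : ∀ a, π a * W = W * π a)
    (hWE : ∀ s, MeasurableSet s → E s * W = W * E s)
    (q p : A × {s : Set X // MeasurableSet s} × H) :
    (inner ℂ (dilVec π E V q) (W (dilVec π E V p)) : ℂ)
      = inner ℂ q.2.2 ((sandwichInst π E V W (q.2.1.1 ∩ p.2.1.1) (star q.1 * p.1)) p.2.2) := by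
  obtain ⟨b, ⟨u, hu⟩, k⟩ := q
  obtain ⟨a, ⟨s, hs⟩, m⟩ := p
  simp only [dilVec]
  have h0 : W (π a (E s (V m))) = π a (E s (W (V m))) := by
    have h1 : W * (π a * E s) = (π a * E s) * W := by
      calc W * (π a * E s) = (W * π a) * E s := by rw [mul_assoc]
      _ = (π a * W) * E s := by rw [hWπ]
      _ = π a * (W * E s) := by rw [mul_assoc]
      _ = π a * (E s * W) := by rw [hWE s hs]
      _ = (π a * E s) * W := by rw [mul_assoc]
    have := congrArg (fun M => M (V m)) h1
    simpa using this
  rw [h0]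
  have h1 : π b (E u (V k)) = ContinuousLinearMap.adjoint (π (star b)) (E u (V k)) := by
    rw [adjoint_pi, star_star]
  rw [h1, ContinuousLinearMap.adjoint_inner_left]
  have h2 : π (star b) (π a (E s (W (V m)))) = π (star b * a) (E s (W (V m))) := by
    rw [map_mul]; rfl
  rw [h2]
  have h3 : E u (V k) = ContinuousLinearMap.adjoint (E u) (V k) := by
    rw [adjoint_E hdil hu]
  rw [h3, ContinuousLinearMap.adjoint_inner_left]
  have h4 : E u (π (star b * a) (E s (W (V m))))
      = π (star b * a) (E (u ∩ s) (W (V m))) := by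
    have h5 : E u * (π (star b * a) * E s) = π (star b * a) * E (u ∩ s) := by
      calc E u * (π (star b * a) * E s) = (E u * π (star b * a)) * E s := by rw [mul_assoc]
      _ = (π (star b * a) * E u) * E s := by rw [hdil.commutes u _ hu]
      _ = π (star b * a) * (E u * E s) := by rw [mul_assoc]
      _ = π (star b * a) * E (u ∩ s) := by rw [hdil.pvm.mul_inter hu hs]
    have := congrArg (fun M => M (W (V m))) h5
    simpa using this
  rw [h4]
  rw [sandwich_apply, ContinuousLinearMap.adjoint_inner_right]

theorem sandwich_one (hdil : IsMinimalBiDilation J π E V) {s : Set X} (hs : MeasurableSet s) :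
    J.toFun s = sandwichInst π E V 1 s := by
  apply LinearMap.ext
  intro a
  rw [hdil.dilation s a hs]
  show (ContinuousLinearMap.adjoint V).comp ((π a * E s).comp V)
      = (ContinuousLinearMap.adjoint V).comp ((π a * E s * (1 : K →L[ℂ] K)).comp V)
  rw [mul_one]

theorem sandwich_sub (s : Set X) :
    sandwichInst π E V 1 s - sandwichInst π E V W s = sandwichInst π E V (1 - W) s := by
  apply LinearMap.ext
  intro a
  show (ContinuousLinearMap.adjoint V).comp ((π a * E s * 1).comp V)
      - (ContinuousLinearMap.adjoint V).comp ((π a * E s * W).comp V)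
    = (ContinuousLinearMap.adjoint V).comp ((π a * E s * (1 - W)).comp V)
  rw [mul_sub, ContinuousLinearMap.sub_comp, ContinuousLinearMap.comp_sub]
end Sandwich

section KeyS
variable {X A H K : Type*} [MeasurableSpace X]
    [NormedRing A] [StarRing A] [NormedAlgebra ℂ A]
    [NormedAddCommGroup H] [InnerProductSpace ℂ H] [CompleteSpace H]
    [NormedAddCommGroup K] [InnerProductSpace ℂ K] [CompleteSpace K]
    {J : CPInstrument X A H} {π : A →⋆ₐ[ℂ] (K →L[ℂ] K)}
    {E : Set X → K →L[ℂ] K} {V : H →L[ℂ] K}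

theorem selfadjoint_comm_scalar (hdil : IsMinimalBiDilation J π E V) (hpure : J.IsPure)
    (S0 : K →L[ℂ] K) (hsa : IsSelfAdjoint S0) (hcπ : ∀ a, π a * S0 = S0 * π a)
    (hcE : ∀ s, MeasurableSet s → E s * S0 = S0 * E s) :
    ∃ r : ℝ, S0 = (r : ℂ) • 1 := by
  classical
  set nrm := ‖S0‖ with hnrm
  have hnrm0 : 0 ≤ nrm := norm_nonneg S0
  have hR : (0 : ℝ) < 2 * nrm + 2 := by linarith
  set P : K →L[ℂ] K :=
    ((((2 * nrm + 2)⁻¹ : ℝ) : ℂ)) • (S0 + (((nrm + 1 : ℝ)) : ℂ) • 1) with hPdef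
  have hadj : ContinuousLinearMap.adjoint S0 = S0 := by
    rw [← ContinuousLinearMap.star_eq_adjoint, hsa.star_eq]
  have hreal_im : ∀ x : K, (inner ℂ x (S0 x) : ℂ).im = 0 := by
    intro x
    have h1 : (starRingEnd ℂ) (inner ℂ x (S0 x) : ℂ) = inner ℂ x (S0 x) := by
      rw [inner_conj_symm]
      calc (inner ℂ (S0 x) x : ℂ) = inner ℂ (ContinuousLinearMap.adjoint S0 x) x := by rw [hadj]
      _ = inner ℂ x (S0 x) := ContinuousLinearMap.adjoint_inner_left S0 x x
    exact Complex.conj_eq_iff_im.mp h1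
  have hreal_bd : ∀ x : K, |(inner ℂ x (S0 x) : ℂ).re| ≤ nrm * ‖x‖ ^ 2 := by
    intro x
    have h1 : |(inner ℂ x (S0 x) : ℂ).re| ≤ ‖(inner ℂ x (S0 x) : ℂ)‖ := Complex.abs_re_le_norm _
    have h2 : ‖(inner ℂ x (S0 x) : ℂ)‖ ≤ ‖x‖ * ‖S0 x‖ := norm_inner_le_norm x (S0 x)
    have h3 : ‖S0 x‖ ≤ ‖S0‖ * ‖x‖ := S0.le_opNorm x
    have h4 : ‖x‖ * ‖S0 x‖ ≤ nrm * ‖x‖ ^ 2 := by nlinarith [norm_nonneg x, norm_nonneg (S0 x)]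
    linarith
  have hinner_P : ∀ x : K, (inner ℂ x (P x) : ℂ)
      = (((2 * nrm + 2)⁻¹ : ℝ) : ℂ) * ((inner ℂ x (S0 x) : ℂ)
          + (((nrm + 1 : ℝ)) : ℂ) * ((‖x‖ : ℂ)) ^ 2) := by
    intro x
    rw [hPdef]
    simp only [ContinuousLinearMap.smul_apply, ContinuousLinearMap.add_apply,
      ContinuousLinearMap.one_apply, inner_smul_right, inner_add_right]
    rw [inner_self_eq_norm_sq_to_K]
    exact rfl
  have hPre : ∀ x : K, (inner ℂ x (P x) : ℂ).re
      = ((2 * nrm + 2)⁻¹ : ℝ) * ((inner ℂ x (S0 x) : ℂ).re + (nrm + 1) * ‖x‖ ^ 2) := by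
    intro x
    rw [hinner_P x]
    rw [Complex.re_ofReal_mul, Complex.add_re, Complex.re_ofReal_mul,
      ← Complex.ofReal_pow, Complex.ofReal_re]
  have hPim : ∀ x : K, (inner ℂ x (P x) : ℂ).im = 0 := by
    intro x
    rw [hinner_P x]
    rw [Complex.im_ofReal_mul, Complex.add_im, Complex.im_ofReal_mul,
      ← Complex.ofReal_pow, Complex.ofReal_im, hreal_im x]
    ring
  have hPpos : ∀ x : K, 0 ≤ (inner ℂ x (P x) : ℂ) := by
    intro x
    rw [Complex.nonneg_iff]
    constructor
    · rw [hPre x]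
      have := hreal_bd x
      have h5 : 0 ≤ (inner ℂ x (S0 x) : ℂ).re + (nrm + 1) * ‖x‖ ^ 2 := by
        have h6 : 0 ≤ ‖x‖ ^ 2 := by positivity
        have h7 : -(nrm * ‖x‖ ^ 2) ≤ (inner ℂ x (S0 x) : ℂ).re := by
          have := abs_le.mp (hreal_bd x)
          linarith [this.1]
        nlinarith
      exact mul_nonneg (le_of_lt (inv_pos.mpr hR)) h5
    · exact (hPim x).symm
  have hPupper : ∀ x : K, (inner ℂ x (P x) : ℂ).re ≤ ‖x‖ ^ 2 := by
    intro x
    rw [hPre x]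
    have h6 : 0 ≤ ‖x‖ ^ 2 := by positivity
    have h7 := abs_le.mp (hreal_bd x)
    rw [inv_mul_le_iff₀ hR]
    nlinarith [h7.2]
  have hPπ : ∀ a, π a * P = P * π a := by
    intro a
    rw [hPdef]
    simp only [mul_smul_comm, smul_mul_assoc, mul_add, add_mul, mul_one, one_mul, hcπ a]
  have hPE : ∀ s, MeasurableSet s → E s * P = P * E s := by
    intro s hs
    rw [hPdef]
    simp only [mul_smul_comm, smul_mul_assoc, mul_add, add_mul, mul_one, one_mul, hcE s hs]
  have hQπ : ∀ a, π a * (1 - P) = (1 - P) * π a := by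
    intro a
    simp only [mul_sub, sub_mul, mul_one, one_mul, hPπ a]
  have hQE : ∀ s, MeasurableSet s → E s * (1 - P) = (1 - P) * E s := by
    intro s hs
    simp only [mul_sub, sub_mul, mul_one, one_mul, hPE s hs]
  have hQpos : ∀ x : K, 0 ≤ (inner ℂ x ((1 - P) x) : ℂ) := by
    intro x
    have hxx : (inner ℂ x x : ℂ) = ((‖x‖ ^ 2 : ℝ) : ℂ) := by
      rw [inner_self_eq_norm_sq_to_K]
      norm_cast
    have h1 : ((1 - P) x) = x - P x := rfl
    rw [h1, inner_sub_right, hxx, Complex.nonneg_iff]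
    constructor
    · rw [Complex.sub_re, Complex.ofReal_re]
      linarith [hPupper x]
    · rw [Complex.sub_im, Complex.ofReal_im, hPim x]
      norm_num
  set J₂ : CPInstrument X A H :=
    { toFun := sandwichInst π E V P
      cp := sandwich_CP hdil hPπ hPE hPpos
      countably_additive := fun a h k s hs hd => (sandwich_CA hdil a h k) s hs hd } with hJ₂
  have hdom : J.Dominates J₂ := by
    intro s hs
    have h1 : J.toFun s - J₂.toFun s = sandwichInst π E V (1 - P) s := by
      show J.toFun s - sandwichInst π E V P s = _
      rw [sandwich_one hdil hs, sandwich_sub]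
    rw [h1]
    exact sandwich_CP hdil hQπ hQE hQpos s hs
  obtain ⟨t, ht0, ht1, hteq⟩ := hpure J₂ hdom
  have hPt : P = (t : ℂ) • 1 := by
    apply ext_of_dilVec hdil
    intro p q
    rw [inner_dilVec_W hdil hPπ hPE q p]
    have h2 : (sandwichInst π E V P (q.2.1.1 ∩ p.2.1.1)) = J₂.toFun (q.2.1.1 ∩ p.2.1.1) := rfl
    rw [h2, hteq _ (q.2.1.2.inter p.2.1.2)]
    have h3 : (((t : ℂ) • J.toFun (q.2.1.1 ∩ p.2.1.1)) (star q.1 * p.1)) p.2.2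
        = (t : ℂ) • ((J.toFun (q.2.1.1 ∩ p.2.1.1) (star q.1 * p.1)) p.2.2) := rfl
    rw [h3, inner_smul_right, ← inner_dilVec_dilVec hdil]
    have h4 : ((t : ℂ) • (1 : K →L[ℂ] K)) (dilVec π E V p) = (t : ℂ) • dilVec π E V p := rfl
    rw [h4, inner_smul_right]
  refine ⟨(2 * nrm + 2) * t - (nrm + 1), ?_⟩
  have h5 := congrArg (fun M : K →L[ℂ] K => (((2 * nrm + 2 : ℝ)) : ℂ) • M) hPt
  rw [hPdef, smul_smul] at h5
  have h6 : ((2 * nrm + 2 : ℝ) : ℂ) * (((2 * nrm + 2)⁻¹ : ℝ) : ℂ) = 1 := by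
    push_cast
    field_simp
  rw [h6, one_smul] at h5
  have h7 : S0 = ((2 * nrm + 2 : ℝ) : ℂ) • ((t : ℂ) • (1 : K →L[ℂ] K))
      - ((nrm + 1 : ℝ) : ℂ) • 1 := by
    rw [← h5]
    abel
  rw [h7, smul_smul]
  rw [← sub_smul]
  congr 1
  push_cast
  ring
end KeyS


/-- **Characterization of pure instruments.** A CP instrument with minimal bi-dilation
`(𝒦, π, E, V)` is pure iff the spectral instrument `πE` is irreducible, i.e. the
commutant `{π(a)E(A)}′` equals `ℂ·I`. -/
theorem CPInstrument.pure_iff_irreducible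
    {X A H K : Type*} [MeasurableSpace X]
    [NormedRing A] [StarRing A] [CStarRing A] [NormedAlgebra ℂ A] [StarModule ℂ A]
    [CompleteSpace A] [NormedAddCommGroup H] [InnerProductSpace ℂ H] [CompleteSpace H]
    [NormedAddCommGroup K] [InnerProductSpace ℂ K] [CompleteSpace K]
    (J : CPInstrument X A H) (π : A →⋆ₐ[ℂ] (K →L[ℂ] K))
    (E : Set X → K →L[ℂ] K) (V : H →L[ℂ] K)
    (hdil : IsMinimalBiDilation J π E V) :
    J.IsPure ↔
      Set.centralizer
          {T : K →L[ℂ] K | ∃ (a : A) (s : Set X), MeasurableSet s ∧ T = π a * E s}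
        = Set.range (fun c : ℂ => c • (1 : K →L[ℂ] K)) := by
  classical
  constructor
  · -- pure → irreducible
    intro hpure
    apply Set.Subset.antisymm
    · intro T hT
      have hTπ : ∀ a, π a * T = T * π a := by
        intro a
        have hmem : π a * E Set.univ ∈
            {T : K →L[ℂ] K | ∃ (a : A) (s : Set X), MeasurableSet s ∧ T = π a * E s} :=
          ⟨a, Set.univ, MeasurableSet.univ, rfl⟩
        have h1 := hT _ hmem
        rwa [hdil.pvm.map_univ, mul_one] at h1
      have hTE : ∀ s, MeasurableSet s → E s * T = T * E s := by
        intro s hs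
        have hmem : π 1 * E s ∈
            {T : K →L[ℂ] K | ∃ (a : A) (s : Set X), MeasurableSet s ∧ T = π a * E s} :=
          ⟨1, s, hs, rfl⟩
        have h1 := hT _ hmem
        rwa [map_one, one_mul] at h1
      have hTπ' : ∀ a, π a * star T = star T * π a := by
        intro a
        have h1 := congrArg star (hTπ (star a))
        rw [star_mul, star_mul] at h1
        have h2 : star (π (star a)) = π a := by rw [← map_star, star_star]
        rw [h2] at h1
        exact h1.symm
      have hTE' : ∀ s, MeasurableSet s → E s * star T = star T * E s := by
        intro s hs
        have h1 := congrArg star (hTE s hs)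
        rw [star_mul, star_mul, (hdil.pvm.selfAdjoint s hs).star_eq] at h1
        exact h1.symm
      set S1 : K →L[ℂ] K := T + star T with hS1
      set S2 : K →L[ℂ] K := Complex.I • (star T - T) with hS2
      have hS1sa : IsSelfAdjoint S1 := by
        show star (T + star T) = T + star T
        rw [star_add, star_star, add_comm]
      have hS2sa : IsSelfAdjoint S2 := by
        show star (Complex.I • (star T - T)) = Complex.I • (star T - T)
        rw [star_smul, star_sub, star_star]
        simp only [Complex.star_def, Complex.conj_I]
        rw [neg_smul, ← smul_neg, neg_sub]
      have hS1π : ∀ a, π a * S1 = S1 * π a := by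
        intro a
        rw [hS1, mul_add, add_mul, hTπ a, hTπ' a]
      have hS1E : ∀ s, MeasurableSet s → E s * S1 = S1 * E s := by
        intro s hs
        rw [hS1, mul_add, add_mul, hTE s hs, hTE' s hs]
      have hS2π : ∀ a, π a * S2 = S2 * π a := by
        intro a
        rw [hS2, mul_smul_comm, smul_mul_assoc, mul_sub, sub_mul, hTπ a, hTπ' a]
      have hS2E : ∀ s, MeasurableSet s → E s * S2 = S2 * E s := by
        intro s hs
        rw [hS2, mul_smul_comm, smul_mul_assoc, mul_sub, sub_mul, hTE s hs, hTE' s hs]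
      obtain ⟨r1, hr1⟩ := selfadjoint_comm_scalar hdil hpure S1 hS1sa hS1π hS1E
      obtain ⟨r2, hr2⟩ := selfadjoint_comm_scalar hdil hpure S2 hS2sa hS2π hS2E
      have hsum : S1 + Complex.I • S2 = (2 : ℂ) • T := by
        rw [hS1, hS2, smul_smul, Complex.I_mul_I, neg_one_smul, neg_sub, two_smul]
        abel
      refine ⟨((r1 : ℂ) + Complex.I * r2) / 2, ?_⟩
      show (((r1 : ℂ) + Complex.I * r2) / 2) • (1 : K →L[ℂ] K) = T
      have h3 : ((r1 : ℂ) + Complex.I * r2) • (1 : K →L[ℂ] K) = (2 : ℂ) • T := by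
        rw [← hsum, hr1, hr2, add_smul, smul_smul]
      calc (((r1 : ℂ) + Complex.I * r2) / 2) • (1 : K →L[ℂ] K)
          = (2⁻¹ : ℂ) • (((r1 : ℂ) + Complex.I * r2) • (1 : K →L[ℂ] K)) := by
            rw [smul_smul]; ring_nf
      _ = (2⁻¹ : ℂ) • ((2 : ℂ) • T) := by rw [h3]
      _ = T := by rw [smul_smul]; norm_num
    · rintro y ⟨c, rfl⟩
      intro m _
      show m * (c • 1) = (c • 1) * m
      rw [mul_smul_comm, smul_mul_assoc, mul_one, one_mul]
  · -- irreducible → pure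
    intro hcomm J' hdom
    obtain ⟨T, hT⟩ := exists_weak_op hdil J' hdom
    set vec := dilVec π E V with hvec
    have hTπ : ∀ a, π a * T = T * π a := by
      intro a
      apply ext_of_dilVec hdil
      intro p q
      have e1 : (inner ℂ (vec q) ((π a * T) (vec p)) : ℂ)
          = pairP J'.toFun (star a * q.1, q.2) p := by
        have s1 : (π a * T) (vec p) = π a (T (vec p)) := rfl
        rw [s1, ← ContinuousLinearMap.adjoint_inner_left (π a) (T (vec p)) (vec q),
          adjoint_pi, pi_apply_dilVec]
        exact hT _ p
      have e2 : (inner ℂ (vec q) ((T * π a) (vec p)) : ℂ)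
          = pairP J'.toFun q (a * p.1, p.2) := by
        have s1 : (T * π a) (vec p) = T (π a (vec p)) := rfl
        rw [s1, pi_apply_dilVec]
        exact hT q _
      rw [e1, e2]
      simp only [pairP]
      rw [star_mul, star_star, mul_assoc]
    have hTE : ∀ s, MeasurableSet s → E s * T = T * E s := by
      intro s hs
      apply ext_of_dilVec hdil
      intro p q
      have e1 : (inner ℂ (vec q) ((E s * T) (vec p)) : ℂ)
          = pairP J'.toFun (q.1, ⟨s ∩ q.2.1.1, hs.inter q.2.1.2⟩, q.2.2) p := by
        have s1 : (E s * T) (vec p) = E s (T (vec p)) := rfl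
        rw [s1, ← ContinuousLinearMap.adjoint_inner_left (E s) (T (vec p)) (vec q),
          adjoint_E hdil hs, E_apply_dilVec hdil hs q]
        exact hT _ p
      have e2 : (inner ℂ (vec q) ((T * E s) (vec p)) : ℂ)
          = pairP J'.toFun q (p.1, ⟨s ∩ p.2.1.1, hs.inter p.2.1.2⟩, p.2.2) := by
        have s1 : (T * E s) (vec p) = T (E s (vec p)) := rfl
        rw [s1, E_apply_dilVec hdil hs p]
        exact hT q _
      rw [e1, e2]
      simp only [pairP]
      have hset : (s ∩ q.2.1.1) ∩ p.2.1.1 = q.2.1.1 ∩ (s ∩ p.2.1.1) := by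
        rw [Set.inter_comm s q.2.1.1, Set.inter_assoc]
      rw [hset]
    have hTmem : T ∈ Set.centralizer
        {T : K →L[ℂ] K | ∃ (a : A) (s : Set X), MeasurableSet s ∧ T = π a * E s} := by
      rintro m ⟨a, s, hs, rfl⟩
      calc (π a * E s) * T = π a * (E s * T) := by rw [mul_assoc]
      _ = π a * (T * E s) := by rw [hTE s hs]
      _ = (π a * T) * E s := by rw [mul_assoc]
      _ = (T * π a) * E s := by rw [hTπ a]
      _ = T * (π a * E s) := by rw [mul_assoc]
    rw [hcomm] at hTmem
    obtain ⟨c, hc⟩ := hTmem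
    have hpair_c : ∀ q p, pairP J'.toFun q p = c * pairP J.toFun q p := by
      intro q p
      rw [← hT q p, ← hc]
      have s1 : ((c • (1 : K →L[ℂ] K)) (vec p)) = c • vec p := rfl
      rw [s1, inner_smul_right, inner_dilVec_dilVec hdil]
      rfl
    have hmat : ∀ (s : Set X), MeasurableSet s → ∀ (a : A) (h k : H),
        (inner ℂ h ((J'.toFun s a) k) : ℂ) = c * inner ℂ h ((J.toFun s a) k) := by
      intro s hs a h k
      have h1 := hpair_c (1, ⟨Set.univ, MeasurableSet.univ⟩, h) (a, ⟨s, hs⟩, k)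
      simp only [pairP, Set.univ_inter, star_one, one_mul] at h1
      exact h1
    have hmatJ : ∀ (s : Set X) (hs : MeasurableSet s) (a : A) (h k : H),
        (inner ℂ h ((J.toFun s a) k) : ℂ)
          = inner ℂ (vec (1, ⟨Set.univ, MeasurableSet.univ⟩, h)) (vec (a, ⟨s, hs⟩, k)) := by
      intro s hs a h k
      rw [inner_dilVec_dilVec hdil]
      simp only [Set.univ_inter, star_one, one_mul]
    -- CA packs and diagonal positivity
    have hCA' : PairCA J'.toFun := fun a h k s hs hd => J'.countably_additive a h k s hs hd
    have hCAJ : PairCA J.toFun := fun a h k s hs hd => J.countably_additive a h k s hs hd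
    have hCAd : PairCA (fun s => J.toFun s - J'.toFun s) := by
      intro a h k s hs hd
      simp only [LinearMap.sub_apply, ContinuousLinearMap.sub_apply, inner_sub_right]
      exact (hCAJ a h k s hs hd).sub (hCA' a h k s hs hd)
    have hpair_sub : ∀ q p, pairP (fun s => J.toFun s - J'.toFun s) q p
        = pairP J.toFun q p - pairP J'.toFun q p := by
      intro q p
      simp only [pairP, LinearMap.sub_apply, ContinuousLinearMap.sub_apply, inner_sub_right]
    have hd1 : ∀ p, 0 ≤ pairP J'.toFun p p := by
      intro p
      have h1 := formB_psd (fun s hs => J'.cp s hs) hCA' (Finsupp.single p 1)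
      rwa [formB_single_single] at h1
    have hd2 : ∀ p, 0 ≤ pairP J.toFun p p - pairP J'.toFun p p := by
      intro p
      have h1 := formB_psd (fun s hs => hdom s hs) hCAd (Finsupp.single p 1)
      rwa [formB_single_single, hpair_sub] at h1
    by_cases hz : ∀ g, vec g = 0
    · refine ⟨0, le_refl 0, zero_le_one, ?_⟩
      intro s hs
      apply LinearMap.ext
      intro a
      apply ext_inner_op
      intro v w
      have h1 := hmat s hs a v w
      have h2 := hmatJ s hs a v w
      rw [hz, inner_zero_left] at h2
      rw [h1, h2, mul_zero]
      have h3 : (((((0 : ℝ) : ℂ)) • J.toFun s) a) w = ((0 : ℝ) : ℂ) • ((J.toFun s a) w) := rfl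
      rw [h3, inner_smul_right]
      norm_num
    · push_neg at hz
      obtain ⟨g₀, hg₀⟩ := hz
      set r : ℝ := ‖vec g₀‖ ^ 2 with hr
      have hrpos : (0 : ℝ) < r := pow_pos (norm_pos_iff.mpr hg₀) 2
      have hpairJ : pairP J.toFun g₀ g₀ = ((r : ℝ) : ℂ) := by
        have h0 : pairP J.toFun g₀ g₀ = (inner ℂ (vec g₀) (vec g₀) : ℂ) :=
          (inner_dilVec_dilVec hdil g₀ g₀).symm
        rw [h0, inner_self_eq_norm_sq_to_K]
        norm_cast
      have hkey : c * ((r : ℝ) : ℂ) = pairP J'.toFun g₀ g₀ := by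
        rw [hpair_c g₀ g₀, hpairJ]
      have hwim : (pairP J'.toFun g₀ g₀).im = 0 := ((Complex.nonneg_iff.1 (hd1 g₀)).2).symm
      have hwre0 : 0 ≤ (pairP J'.toFun g₀ g₀).re := (Complex.nonneg_iff.1 (hd1 g₀)).1
      have hwrele : (pairP J'.toFun g₀ g₀).re ≤ r := by
        have h1 := (Complex.nonneg_iff.1 (hd2 g₀)).1
        rw [Complex.sub_re, hpairJ, Complex.ofReal_re] at h1
        linarith
      have hcim : c.im = 0 := by
        have h1 := congrArg Complex.im hkey
        rw [Complex.mul_im, Complex.ofReal_re, Complex.ofReal_im, hwim] at h1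
        have h2 : c.im * r = 0 := by linarith
        rcases mul_eq_zero.mp h2 with h | h
        · exact h
        · exact absurd h (ne_of_gt hrpos)
      have hcre : c.re * r = (pairP J'.toFun g₀ g₀).re := by
        have h1 := congrArg Complex.re hkey
        rw [Complex.mul_re, Complex.ofReal_re, Complex.ofReal_im] at h1
        rw [hcim] at h1
        simpa using h1
      have hceq : c = ((c.re : ℝ) : ℂ) := by
        apply Complex.ext
        · rw [Complex.ofReal_re]
        · rw [Complex.ofReal_im, hcim]
      refine ⟨c.re, ?_, ?_, ?_⟩
      · nlinarith
      · nlinarith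
      · intro s hs
        apply LinearMap.ext
        intro a
        apply ext_inner_op
        intro v w
        have h1 := hmat s hs a v w
        have h3 : ((((c.re : ℝ) : ℂ) • J.toFun s) a) w = ((c.re : ℝ) : ℂ) • ((J.toFun s a) w) := rfl
        rw [h1, h3, inner_smul_right, ← hceq]
end
end

section
/- Let ℐ : 𝒪(X) → CP(𝒜, B(ℋ)) be a unital CP instrument with minimal bi-dilation quadruple (𝒦, π, E, V), and let P₁ and P₂ be the orthogonal projections of 𝒦 onto the closed subspaces [π(𝒜)V(ℋ)] and [E(𝒪(X))V(ℋ)] respectively. Then the following are equivalent: (i) ℐ is decomposable, i.e. ℐ(A)(a) = φ_ℐ(a)μ_ℐ(A) for all a ∈ 𝒜, A ∈ 𝒪(X); (ii) P₁E(A)P₁VV* = VV*P₁E(A)P₁VV* = VV*P₁E(A)P₁ for all A ∈ 𝒪(X); (iii) P₂π(a)P₂VV* = VV*P₂π(a)P₂VV* = VV*π(a)P₂ for all a ∈ 𝒜. -/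
open scoped InnerProductSpace ComplexOrder
open Function

noncomputable section

section DecompAux

variable {K : Type*} [NormedAddCommGroup K] [InnerProductSpace ℂ K] [CompleteSpace K]

omit [CompleteSpace K] in
lemma aux_proj_fix (P : K →L[ℂ] K) (hid : P * P = P) {y : K}
    (hy : y ∈ LinearMap.range (P : K →ₗ[ℂ] K)) : P y = y := by
  obtain ⟨x, rfl⟩ := hy
  have h := congrFun (congrArg (DFunLike.coe) hid) x
  simpa using h

lemma aux_proj_zero (P : K →L[ℂ] K) (hsa : IsSelfAdjoint P) (hid : P * P = P)
    (S : Set K)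
    (hr : LinearMap.range (P : K →ₗ[ℂ] K) = (Submodule.span ℂ S).topologicalClosure)
    (u : K) (hu : ∀ y ∈ S, (inner ℂ y u : ℂ) = 0) : P u = 0 := by
  have hle : (Submodule.span ℂ S).topologicalClosure ≤ (ℂ ∙ u)ᗮ :=
    Submodule.topologicalClosure_minimal _
      (Submodule.span_le.mpr fun y hy =>
        Submodule.mem_orthogonal_singleton_iff_inner_left.mpr (hu y hy))
      (Submodule.isClosed_orthogonal _)
  have hmem : P u ∈ LinearMap.range (P : K →ₗ[ℂ] K) := ⟨u, rfl⟩
  rw [hr] at hmem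
  have h0 : (inner ℂ (P u) u : ℂ) = 0 :=
    Submodule.mem_orthogonal_singleton_iff_inner_left.mp (hle hmem)
  have hadj : ContinuousLinearMap.adjoint P = P := by
    rw [← ContinuousLinearMap.star_eq_adjoint]; exact hsa.star_eq
  have h1 := ContinuousLinearMap.adjoint_inner_left P u (P u)
  rw [hadj] at h1
  have hPP : P (P u) = P u := aux_proj_fix P hid ⟨u, rfl⟩
  rw [hPP, h0] at h1
  exact inner_self_eq_zero.mp h1.symm

end DecompAux

/-- **Characterization of decomposable instruments.** Let `ℐ` be a unital CP instrument
with minimal bi-dilation `(𝒦, π, E, V)`, and let `P₁`, `P₂` be the orthogonal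
projections onto `[π(𝒜)Vℋ]` and `[E(𝒪(X))Vℋ]`. Then `ℐ` is decomposable iff
`P₁E(A)P₁VV* = VV*P₁E(A)P₁VV* = VV*P₁E(A)P₁` for all `A`, iff
`P₂π(a)P₂VV* = VV*P₂π(a)P₂VV* = VV*π(a)P₂` for all `a`. -/
theorem CPInstrument.decomposable_iff
    {X A H K : Type*} [MeasurableSpace X]
    [NormedRing A] [StarRing A] [CStarRing A] [NormedAlgebra ℂ A] [StarModule ℂ A]
    [CompleteSpace A] [NormedAddCommGroup H] [InnerProductSpace ℂ H] [CompleteSpace H]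
    [NormedAddCommGroup K] [InnerProductSpace ℂ K] [CompleteSpace K]
    (J : CPInstrument X A H) (hu : J.IsUnital)
    (π : A →⋆ₐ[ℂ] (K →L[ℂ] K)) (E : Set X → K →L[ℂ] K) (V : H →L[ℂ] K)
    (hdil : IsMinimalBiDilation J π E V)
    (P₁ P₂ : K →L[ℂ] K)
    (hP₁sa : IsSelfAdjoint P₁) (hP₁idem : P₁ * P₁ = P₁)
    (hP₁range : LinearMap.range (P₁ : K →ₗ[ℂ] K) =
      (Submodule.span ℂ {y : K | ∃ (a : A) (h : H), y = π a (V h)}).topologicalClosure)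
    (hP₂sa : IsSelfAdjoint P₂) (hP₂idem : P₂ * P₂ = P₂)
    (hP₂range : LinearMap.range (P₂ : K →ₗ[ℂ] K) =
      (Submodule.span ℂ {y : K | ∃ (s : Set X) (h : H),
        MeasurableSet s ∧ y = E s (V h)}).topologicalClosure) :
    ((∀ (s : Set X) (a : A), MeasurableSet s →
        J.toFun s a = J.toFun Set.univ a * J.toFun s 1) ↔
      (∀ s : Set X, MeasurableSet s →
        P₁ * E s * P₁ * (V.comp (ContinuousLinearMap.adjoint V))
          = (V.comp (ContinuousLinearMap.adjoint V)) * (P₁ * E s * P₁)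
              * (V.comp (ContinuousLinearMap.adjoint V)) ∧
        (V.comp (ContinuousLinearMap.adjoint V)) * (P₁ * E s * P₁)
            * (V.comp (ContinuousLinearMap.adjoint V))
          = (V.comp (ContinuousLinearMap.adjoint V)) * (P₁ * E s * P₁))) ∧
    ((∀ (s : Set X) (a : A), MeasurableSet s →
        J.toFun s a = J.toFun Set.univ a * J.toFun s 1) ↔
      (∀ a : A,
        P₂ * π a * P₂ * (V.comp (ContinuousLinearMap.adjoint V))
          = (V.comp (ContinuousLinearMap.adjoint V)) * (P₂ * π a * P₂)
              * (V.comp (ContinuousLinearMap.adjoint V)) ∧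
        (V.comp (ContinuousLinearMap.adjoint V)) * (P₂ * π a * P₂)
            * (V.comp (ContinuousLinearMap.adjoint V))
          = (V.comp (ContinuousLinearMap.adjoint V)) * π a * P₂)) := by
  obtain ⟨pvm, hcomm, hdilation, -⟩ := hdil
  set Vd := ContinuousLinearMap.adjoint V with hVddef
  have hπ1 : π 1 = 1 := map_one π
  have hE1 : E Set.univ = 1 := pvm.map_univ
  have hJ : ∀ s : Set X, MeasurableSet s → ∀ (a : A) (x : H),
      J.toFun s a x = Vd (π a (E s (V x))) := by
    intro s hs a x
    rw [hdilation s a hs]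
    simp
  have hVdV : ∀ x : H, Vd (V x) = x := by
    intro x
    have h1 := hJ Set.univ MeasurableSet.univ 1 x
    rw [hu] at h1
    simpa [hπ1, hE1] using h1.symm
  have hπadj : ∀ a : A, ContinuousLinearMap.adjoint (π a) = π (star a) := by
    intro a
    rw [← ContinuousLinearMap.star_eq_adjoint, ← map_star]
  have hEadj : ∀ s : Set X, MeasurableSet s → ContinuousLinearMap.adjoint (E s) = E s := by
    intro s hs
    rw [← ContinuousLinearMap.star_eq_adjoint]
    exact (pvm.selfAdjoint s hs).star_eq
  have hP₁adj : ContinuousLinearMap.adjoint P₁ = P₁ := by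
    rw [← ContinuousLinearMap.star_eq_adjoint]; exact hP₁sa.star_eq
  have hP₂adj : ContinuousLinearMap.adjoint P₂ = P₂ := by
    rw [← ContinuousLinearMap.star_eq_adjoint]; exact hP₂sa.star_eq
  have hVl : ∀ (h : H) (w : K), (inner ℂ (V h) w : ℂ) = inner ℂ h (Vd w) :=
    fun h w => (ContinuousLinearMap.adjoint_inner_right V h w).symm
  have hVr : ∀ (w : K) (h : H), (inner ℂ w (V h) : ℂ) = inner ℂ (Vd w) h :=
    fun w h => (ContinuousLinearMap.adjoint_inner_left V h w).symm
  have hπl : ∀ (a : A) (z w : K), (inner ℂ (π a z) w : ℂ) = inner ℂ z (π (star a) w) := by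
    intro a z w
    have h := ContinuousLinearMap.adjoint_inner_left (π (star a)) w z
    rwa [hπadj, star_star] at h
  have hπr : ∀ (a : A) (z w : K), (inner ℂ z (π a w) : ℂ) = inner ℂ (π (star a) z) w := by
    intro a z w
    have h := ContinuousLinearMap.adjoint_inner_right (π (star a)) z w
    rwa [hπadj, star_star] at h
  have hEi : ∀ s : Set X, MeasurableSet s → ∀ z w : K,
      (inner ℂ (E s z) w : ℂ) = inner ℂ z (E s w) := by
    intro s hs z w
    have h := ContinuousLinearMap.adjoint_inner_left (E s) w z
    rwa [hEadj s hs] at h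
  have hP₁i : ∀ z w : K, (inner ℂ (P₁ z) w : ℂ) = inner ℂ z (P₁ w) := by
    intro z w
    have h := ContinuousLinearMap.adjoint_inner_left P₁ w z
    rwa [hP₁adj] at h
  have hP₂i : ∀ z w : K, (inner ℂ (P₂ z) w : ℂ) = inner ℂ z (P₂ w) := by
    intro z w
    have h := ContinuousLinearMap.adjoint_inner_left P₂ w z
    rwa [hP₂adj] at h
  have hfix1 : ∀ (a : A) (x : H), P₁ (π a (V x)) = π a (V x) := by
    intro a x
    refine aux_proj_fix P₁ hP₁idem ?_
    rw [hP₁range]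
    exact Submodule.le_topologicalClosure _ (Submodule.subset_span ⟨a, x, rfl⟩)
  have hP₁V : ∀ x : H, P₁ (V x) = V x := by
    intro x
    simpa [hπ1] using hfix1 1 x
  have hfix2 : ∀ s : Set X, MeasurableSet s → ∀ x : H, P₂ (E s (V x)) = E s (V x) := by
    intro s hs x
    refine aux_proj_fix P₂ hP₂idem ?_
    rw [hP₂range]
    exact Submodule.le_topologicalClosure _ (Submodule.subset_span ⟨s, x, hs, rfl⟩)
  have hP₂V : ∀ x : H, P₂ (V x) = V x := by
    intro x
    simpa [hE1] using hfix2 Set.univ MeasurableSet.univ x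
  have hVdP₁ : ∀ z : K, Vd (P₁ z) = Vd z := by
    intro z
    apply ext_inner_left ℂ
    intro h
    calc (inner ℂ h (Vd (P₁ z)) : ℂ)
        = inner ℂ (V h) (P₁ z) := (hVl h _).symm
      _ = inner ℂ (P₁ (V h)) z := (hP₁i (V h) z).symm
      _ = inner ℂ (V h) z := by rw [hP₁V]
      _ = inner ℂ h (Vd z) := hVl h z
  have hVdP₂ : ∀ z : K, Vd (P₂ z) = Vd z := by
    intro z
    apply ext_inner_left ℂ
    intro h
    calc (inner ℂ h (Vd (P₂ z)) : ℂ)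
        = inner ℂ (V h) (P₂ z) := (hVl h _).symm
      _ = inner ℂ (P₂ (V h)) z := (hP₂i (V h) z).symm
      _ = inner ℂ (V h) z := by rw [hP₂V]
      _ = inner ℂ h (Vd z) := hVl h z
  have hJadj : ∀ s : Set X, MeasurableSet s → ∀ (a : A) (h x : H),
      (inner ℂ (J.toFun s (star a) h) x : ℂ) = inner ℂ h (J.toFun s a x) := by
    intro s hs a h x
    calc (inner ℂ (J.toFun s (star a) h) x : ℂ)
        = inner ℂ (Vd (π (star a) (E s (V h)))) x := by rw [hJ s hs]
      _ = inner ℂ (π (star a) (E s (V h))) (V x) := (hVr _ x).symm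
      _ = inner ℂ (E s (V h)) (π (star (star a)) (V x)) := hπl (star a) _ _
      _ = inner ℂ (E s (V h)) (π a (V x)) := by rw [star_star]
      _ = inner ℂ (V h) (E s (π a (V x))) := hEi s hs _ _
      _ = inner ℂ (V h) (π a (E s (V x))) := by
          have hc := congrFun (congrArg DFunLike.coe (hcomm s a hs)) (V x)
          simp only [ContinuousLinearMap.mul_apply] at hc
          rw [hc]
      _ = inner ℂ h (Vd (π a (E s (V x)))) := hVl h _
      _ = inner ℂ h (J.toFun s a x) := by rw [hJ s hs]
  -- (i) → C₁
  have hC1_of_D : (∀ (s : Set X) (a : A), MeasurableSet s →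
        J.toFun s a = J.toFun Set.univ a * J.toFun s 1) →
      ∀ s : Set X, MeasurableSet s → ∀ x : H,
        P₁ (E s (V x)) = V (Vd (E s (V x))) := by
    intro hD s hs x
    have hz : P₁ (E s (V x) - V (Vd (E s (V x)))) = 0 := by
      apply aux_proj_zero P₁ hP₁sa hP₁idem _ hP₁range
      rintro y ⟨a, h, rfl⟩
      rw [inner_sub_right]
      have e1 : (inner ℂ (π a (V h)) (E s (V x)) : ℂ) = inner ℂ h (J.toFun s (star a) x) := by
        calc (inner ℂ (π a (V h)) (E s (V x)) : ℂ)
            = inner ℂ (V h) (π (star a) (E s (V x))) := hπl a _ _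
          _ = inner ℂ h (Vd (π (star a) (E s (V x)))) := hVl h _
          _ = inner ℂ h (J.toFun s (star a) x) := by rw [hJ s hs]
      have e2 : (inner ℂ (π a (V h)) (V (Vd (E s (V x)))) : ℂ)
          = inner ℂ h ((J.toFun Set.univ (star a) * J.toFun s 1) x) := by
        calc (inner ℂ (π a (V h)) (V (Vd (E s (V x)))) : ℂ)
            = inner ℂ (V h) (π (star a) (V (Vd (E s (V x))))) := hπl a _ _
          _ = inner ℂ h (Vd (π (star a) (V (Vd (E s (V x)))))) := hVl h _
          _ = inner ℂ h ((J.toFun Set.univ (star a) * J.toFun s 1) x) := by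
              rw [ContinuousLinearMap.mul_apply, hJ Set.univ MeasurableSet.univ,
                hJ s hs]
              simp [hπ1, hE1]
      rw [e1, e2, hD s (star a) hs, sub_self]
    rw [map_sub, hP₁V] at hz
    exact sub_eq_zero.mp hz
  -- C₁ → (i)
  have hD_of_C1 : (∀ s : Set X, MeasurableSet s → ∀ x : H,
        P₁ (E s (V x)) = V (Vd (E s (V x)))) →
      ∀ (s : Set X) (a : A), MeasurableSet s →
        J.toFun s a = J.toFun Set.univ a * J.toFun s 1 := by
    intro hC s a hs
    ext x
    rw [ContinuousLinearMap.mul_apply]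
    apply ext_inner_left ℂ
    intro h
    calc (inner ℂ h (J.toFun s a x) : ℂ)
        = inner ℂ h (Vd (π a (E s (V x)))) := by rw [hJ s hs]
      _ = inner ℂ (V h) (π a (E s (V x))) := (hVl h _).symm
      _ = inner ℂ (π (star a) (V h)) (E s (V x)) := hπr a _ _
      _ = inner ℂ (P₁ (π (star a) (V h))) (E s (V x)) := by rw [hfix1]
      _ = inner ℂ (π (star a) (V h)) (P₁ (E s (V x))) := hP₁i _ _
      _ = inner ℂ (π (star a) (V h)) (V (Vd (E s (V x)))) := by rw [hC s hs x]
      _ = inner ℂ (V h) (π a (V (Vd (E s (V x))))) := (hπr a _ _).symm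
      _ = inner ℂ h (Vd (π a (V (Vd (E s (V x)))))) := hVl h _
      _ = inner ℂ h (J.toFun Set.univ a (J.toFun s 1 x)) := by
          rw [hJ Set.univ MeasurableSet.univ, hJ s hs]
          simp [hπ1, hE1]
  -- C₁ → (ii)
  have hii_of_C1 : (∀ s : Set X, MeasurableSet s → ∀ x : H,
        P₁ (E s (V x)) = V (Vd (E s (V x)))) →
      ∀ s : Set X, MeasurableSet s →
        P₁ * E s * P₁ * (V.comp Vd)
          = (V.comp Vd) * (P₁ * E s * P₁) * (V.comp Vd) ∧
        (V.comp Vd) * (P₁ * E s * P₁) * (V.comp Vd)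
          = (V.comp Vd) * (P₁ * E s * P₁) := by
    intro hC s hs
    have hadjC : ∀ z : K, Vd (E s (P₁ z)) = Vd (E s (V (Vd z))) := by
      intro z
      apply ext_inner_left ℂ
      intro h
      calc (inner ℂ h (Vd (E s (P₁ z))) : ℂ)
          = inner ℂ (V h) (E s (P₁ z)) := (hVl h _).symm
        _ = inner ℂ (E s (V h)) (P₁ z) := (hEi s hs _ _).symm
        _ = inner ℂ (P₁ (E s (V h))) z := (hP₁i _ _).symm
        _ = inner ℂ (V (Vd (E s (V h)))) z := by rw [hC s hs h]
        _ = inner ℂ (Vd (E s (V h))) (Vd z) := hVl _ _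
        _ = inner ℂ (E s (V h)) (V (Vd z)) := (hVr _ _).symm
        _ = inner ℂ (V h) (E s (V (Vd z))) := hEi s hs _ _
        _ = inner ℂ h (Vd (E s (V (Vd z)))) := hVl h _
    constructor
    · ext x
      simp only [ContinuousLinearMap.mul_apply, ContinuousLinearMap.coe_comp',
        Function.comp_apply]
      rw [hP₁V, hC s hs, hVdV]
    · ext x
      simp only [ContinuousLinearMap.mul_apply, ContinuousLinearMap.coe_comp',
        Function.comp_apply]
      rw [hP₁V, hC s hs, hVdV, hVdP₁, hadjC]
  -- (ii) → C₁
  have hC1_of_ii : (∀ s : Set X, MeasurableSet s →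
        P₁ * E s * P₁ * (V.comp Vd)
          = (V.comp Vd) * (P₁ * E s * P₁) * (V.comp Vd) ∧
        (V.comp Vd) * (P₁ * E s * P₁) * (V.comp Vd)
          = (V.comp Vd) * (P₁ * E s * P₁)) →
      ∀ s : Set X, MeasurableSet s → ∀ x : H,
        P₁ (E s (V x)) = V (Vd (E s (V x))) := by
    intro hii s hs x
    have key : ∀ z : K, Vd (E s (V (Vd z))) = Vd (E s (P₁ z)) := by
      intro z
      have h2z := congrFun (congrArg DFunLike.coe (hii s hs).2) z
      simp only [ContinuousLinearMap.mul_apply, ContinuousLinearMap.coe_comp',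
        Function.comp_apply] at h2z
      rw [hP₁V, hVdP₁, hVdP₁] at h2z
      have h3 : Vd (V (Vd (E s (V (Vd z))))) = Vd (V (Vd (E s (P₁ z)))) := by
        rw [h2z]
      rwa [hVdV, hVdV] at h3
    apply ext_inner_left ℂ
    intro z
    calc (inner ℂ z (P₁ (E s (V x))) : ℂ)
        = inner ℂ (P₁ z) (E s (V x)) := (hP₁i z _).symm
      _ = inner ℂ (E s (P₁ z)) (V x) := (hEi s hs _ _).symm
      _ = inner ℂ (Vd (E s (P₁ z))) x := hVr _ x
      _ = inner ℂ (Vd (E s (V (Vd z)))) x := by rw [key z]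
      _ = inner ℂ (E s (V (Vd z))) (V x) := (hVr _ x).symm
      _ = inner ℂ (V (Vd z)) (E s (V x)) := hEi s hs _ _
      _ = inner ℂ (Vd z) (Vd (E s (V x))) := hVl _ _
      _ = inner ℂ z (V (Vd (E s (V x)))) := (hVr z _).symm
  -- (i) → C₂
  have hC2_of_D : (∀ (s : Set X) (a : A), MeasurableSet s →
        J.toFun s a = J.toFun Set.univ a * J.toFun s 1) →
      ∀ (a : A) (x : H), P₂ (π a (V x)) = V (Vd (π a (V x))) := by
    intro hD a x
    have hD' : ∀ s : Set X, MeasurableSet s → ∀ (b : A) (y : H),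
        J.toFun s b y = J.toFun s 1 (J.toFun Set.univ b y) := by
      intro s hs b y
      apply ext_inner_left ℂ
      intro h
      calc (inner ℂ h (J.toFun s b y) : ℂ)
          = inner ℂ (J.toFun s (star b) h) y := (hJadj s hs b h y).symm
        _ = inner ℂ ((J.toFun Set.univ (star b) * J.toFun s 1) h) y := by
            rw [hD s (star b) hs]
        _ = inner ℂ (J.toFun Set.univ (star b) (J.toFun s 1 h)) y := by
            rw [ContinuousLinearMap.mul_apply]
        _ = inner ℂ (J.toFun s 1 h) (J.toFun Set.univ b y) :=
            hJadj Set.univ MeasurableSet.univ b _ y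
        _ = inner ℂ (J.toFun s (star 1) h) (J.toFun Set.univ b y) := by rw [star_one]
        _ = inner ℂ h (J.toFun s 1 (J.toFun Set.univ b y)) := hJadj s hs 1 h _
    have hz : P₂ (π a (V x) - V (Vd (π a (V x)))) = 0 := by
      apply aux_proj_zero P₂ hP₂sa hP₂idem _ hP₂range
      rintro y ⟨s, h, hs, rfl⟩
      rw [inner_sub_right]
      have e1 : (inner ℂ (E s (V h)) (π a (V x)) : ℂ) = inner ℂ h (J.toFun s a x) := by
        calc (inner ℂ (E s (V h)) (π a (V x)) : ℂ)
            = inner ℂ (V h) (E s (π a (V x))) := hEi s hs _ _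
          _ = inner ℂ (V h) (π a (E s (V x))) := by
              have hc := congrFun (congrArg DFunLike.coe (hcomm s a hs)) (V x)
              simp only [ContinuousLinearMap.mul_apply] at hc
              rw [hc]
          _ = inner ℂ h (Vd (π a (E s (V x)))) := hVl h _
          _ = inner ℂ h (J.toFun s a x) := by rw [hJ s hs]
      have e2 : (inner ℂ (E s (V h)) (V (Vd (π a (V x)))) : ℂ)
          = inner ℂ h (J.toFun s 1 (J.toFun Set.univ a x)) := by
        calc (inner ℂ (E s (V h)) (V (Vd (π a (V x)))) : ℂ)
            = inner ℂ (V h) (E s (V (Vd (π a (V x))))) := hEi s hs _ _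
          _ = inner ℂ h (Vd (E s (V (Vd (π a (V x)))))) := hVl h _
          _ = inner ℂ h (J.toFun s 1 (J.toFun Set.univ a x)) := by
              rw [hJ s hs, hJ Set.univ MeasurableSet.univ]
              simp [hπ1, hE1]
      rw [e1, e2, hD' s hs a x, sub_self]
    rw [map_sub, hP₂V] at hz
    exact sub_eq_zero.mp hz
  -- C₂ → (i)
  have hD_of_C2 : (∀ (a : A) (x : H), P₂ (π a (V x)) = V (Vd (π a (V x)))) →
      ∀ (s : Set X) (a : A), MeasurableSet s →
        J.toFun s a = J.toFun Set.univ a * J.toFun s 1 := by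
    intro hC s a hs
    ext x
    rw [ContinuousLinearMap.mul_apply]
    apply ext_inner_left ℂ
    intro h
    calc (inner ℂ h (J.toFun s a x) : ℂ)
        = inner ℂ h (Vd (π a (E s (V x)))) := by rw [hJ s hs]
      _ = inner ℂ (V h) (π a (E s (V x))) := (hVl h _).symm
      _ = inner ℂ (π (star a) (V h)) (E s (V x)) := hπr a _ _
      _ = inner ℂ (π (star a) (V h)) (P₂ (E s (V x))) := by rw [hfix2 s hs x]
      _ = inner ℂ (P₂ (π (star a) (V h))) (E s (V x)) := (hP₂i _ _).symm
      _ = inner ℂ (V (Vd (π (star a) (V h)))) (E s (V x)) := by rw [hC (star a) h]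
      _ = inner ℂ (Vd (π (star a) (V h))) (Vd (E s (V x))) := hVl _ _
      _ = inner ℂ (π (star a) (V h)) (V (Vd (E s (V x)))) := (hVr _ _).symm
      _ = inner ℂ (V h) (π a (V (Vd (E s (V x))))) := (hπr a _ _).symm
      _ = inner ℂ h (Vd (π a (V (Vd (E s (V x)))))) := hVl h _
      _ = inner ℂ h (J.toFun Set.univ a (J.toFun s 1 x)) := by
          rw [hJ Set.univ MeasurableSet.univ, hJ s hs]
          simp [hπ1, hE1]
  -- C₂ → (iii)
  have hiii_of_C2 : (∀ (a : A) (x : H), P₂ (π a (V x)) = V (Vd (π a (V x)))) →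
      ∀ a : A,
        P₂ * π a * P₂ * (V.comp Vd)
          = (V.comp Vd) * (P₂ * π a * P₂) * (V.comp Vd) ∧
        (V.comp Vd) * (P₂ * π a * P₂) * (V.comp Vd)
          = (V.comp Vd) * π a * P₂ := by
    intro hC a
    have hadjC : ∀ (b : A) (z : K), Vd (π b (P₂ z)) = Vd (π b (V (Vd z))) := by
      intro b z
      apply ext_inner_left ℂ
      intro h
      calc (inner ℂ h (Vd (π b (P₂ z))) : ℂ)
          = inner ℂ (V h) (π b (P₂ z)) := (hVl h _).symm
        _ = inner ℂ (π (star b) (V h)) (P₂ z) := hπr b _ _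
        _ = inner ℂ (P₂ (π (star b) (V h))) z := (hP₂i _ _).symm
        _ = inner ℂ (V (Vd (π (star b) (V h)))) z := by rw [hC (star b) h]
        _ = inner ℂ (Vd (π (star b) (V h))) (Vd z) := hVl _ _
        _ = inner ℂ (π (star b) (V h)) (V (Vd z)) := (hVr _ _).symm
        _ = inner ℂ (V h) (π b (V (Vd z))) := (hπr b _ _).symm
        _ = inner ℂ h (Vd (π b (V (Vd z)))) := hVl h _
    constructor
    · ext x
      simp only [ContinuousLinearMap.mul_apply, ContinuousLinearMap.coe_comp',
        Function.comp_apply]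
      rw [hP₂V, hC a, hVdV]
    · ext x
      simp only [ContinuousLinearMap.mul_apply, ContinuousLinearMap.coe_comp',
        Function.comp_apply]
      rw [hP₂V, hC a, hVdV, hadjC a x]
  -- (iii) → C₂
  have hC2_of_iii : (∀ a : A,
        P₂ * π a * P₂ * (V.comp Vd)
          = (V.comp Vd) * (P₂ * π a * P₂) * (V.comp Vd) ∧
        (V.comp Vd) * (P₂ * π a * P₂) * (V.comp Vd)
          = (V.comp Vd) * π a * P₂) →
      ∀ (a : A) (x : H), P₂ (π a (V x)) = V (Vd (π a (V x))) := by
    intro hiii a x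
    have key : ∀ (b : A) (z : K), Vd (π b (V (Vd z))) = Vd (π b (P₂ z)) := by
      intro b z
      have h2z := congrFun (congrArg DFunLike.coe (hiii b).2) z
      simp only [ContinuousLinearMap.mul_apply, ContinuousLinearMap.coe_comp',
        Function.comp_apply] at h2z
      rw [hP₂V, hVdP₂] at h2z
      have h3 : Vd (V (Vd (π b (V (Vd z))))) = Vd (V (Vd (π b (P₂ z)))) := by
        rw [h2z]
      rwa [hVdV, hVdV] at h3
    apply ext_inner_left ℂ
    intro z
    calc (inner ℂ z (P₂ (π a (V x))) : ℂ)
        = inner ℂ (P₂ z) (π a (V x)) := (hP₂i z _).symm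
      _ = inner ℂ (π (star a) (P₂ z)) (V x) := hπr a _ _
      _ = inner ℂ (Vd (π (star a) (P₂ z))) x := hVr _ x
      _ = inner ℂ (Vd (π (star a) (V (Vd z)))) x := by rw [key (star a) z]
      _ = inner ℂ (π (star a) (V (Vd z))) (V x) := (hVr _ x).symm
      _ = inner ℂ (V (Vd z)) (π a (V x)) := (hπr a _ _).symm
      _ = inner ℂ (Vd z) (Vd (π a (V x))) := hVl _ _
      _ = inner ℂ z (V (Vd (π a (V x)))) := (hVr z _).symm
  exact ⟨⟨fun hD => hii_of_C1 (hC1_of_D hD), fun hii => hD_of_C1 (hC1_of_ii hii)⟩,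
    ⟨fun hD => hiii_of_C2 (hC2_of_D hD), fun hiii => hD_of_C2 (hC2_of_iii hiii)⟩⟩
end
end

section
/- (Ozawa) Let ℐ : 𝒪(X) → CP(𝒜, B(ℋ)) be a unital CP instrument. If either the CP marginal φ_ℐ is a *-homomorphism or the POVM marginal μ_ℐ is a projection-valued (spectral) measure, then ℐ is decomposable, i.e. ℐ(A)(a) = φ_ℐ(a)μ_ℐ(A) for all a ∈ 𝒜 and A ∈ 𝒪(X). -/
open scoped InnerProductSpace ComplexOrder
open Function

noncomputable section

lemma lin_aux (z p : ℂ) (h : ∀ t : ℝ, 0 ≤ (t:ℂ) * z + (t:ℂ)^2 * p) : z = 0 := by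
  have hre : ∀ t : ℝ, 0 ≤ t * z.re + t^2 * p.re ∧ t * z.im + t^2 * p.im = 0 := by
    intro t
    have := (Complex.le_def.mp (h t))
    rw [← Complex.ofReal_pow] at this
    constructor
    · simpa only [Complex.zero_re, Complex.add_re, Complex.mul_re, Complex.ofReal_re,
        Complex.ofReal_im, zero_mul, sub_zero] using this.1
    · simpa only [Complex.zero_im, Complex.add_im, Complex.mul_im, Complex.ofReal_re,
        Complex.ofReal_im, zero_mul, add_zero] using this.2.symm
  have him : z.im = 0 := by
    have h1 := (hre 1).2; have h2 := (hre (-1)).2; nlinarith [h1, h2]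
  have hpre : 0 ≤ p.re := by
    have h1 := (hre 1).1; have h2 := (hre (-1)).1; nlinarith
  have hzre : z.re = 0 := by
    by_contra hz
    have key : ∀ t : ℝ, 0 < t → |z.re| ≤ t * p.re := by
      intro t ht
      have h1 := (hre t).1; have h2 := (hre (-t)).1
      rcases abs_cases z.re with ⟨he, _⟩ | ⟨he, _⟩ <;> nlinarith
    have hc : (0:ℝ) < 2 * (p.re + 1) := by positivity
    have := key (|z.re| / (2 * (p.re + 1))) (by positivity)
    rw [div_mul_eq_mul_div, le_div_iff₀ hc] at this
    have habs : 0 < |z.re| := abs_pos.mpr hz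
    nlinarith [this, habs, hpre]
  exact Complex.ext hzre him

lemma quad_aux (α β p : ℂ)
    (h : ∀ c : ℂ, 0 ≤ (starRingEnd ℂ) c * α + c * β + (starRingEnd ℂ) c * c * p) :
    α = 0 ∧ β = 0 := by
  have h1 : α + β = 0 := by
    apply lin_aux _ p
    intro t
    have := h (t : ℂ)
    rw [Complex.conj_ofReal] at this
    convert this using 1; ring
  have h3 : β - α = 0 := by
    have h2 : Complex.I * (β - α) = 0 := by
      apply lin_aux _ p
      intro t
      have := h ((t : ℂ) * Complex.I)
      simp only [map_mul, Complex.conj_ofReal, Complex.conj_I] at this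
      convert this using 1
      ring_nf
      rw [Complex.I_sq]
      ring
    rcases mul_eq_zero.mp h2 with h | h
    · exact absurd h Complex.I_ne_zero
    · exact h
  constructor
  · linear_combination (h1 - h3) / 2
  · linear_combination (h1 + h3) / 2

lemma IsCompletelyPositive.orth {A H : Type*} [NormedRing A] [StarRing A] [NormedAlgebra ℂ A]
    [NormedAddCommGroup H] [InnerProductSpace ℂ H]
    {Ψ : A →ₗ[ℂ] (H →L[ℂ] H)} (hΨ : IsCompletelyPositive Ψ)
    {n : ℕ} (a : Fin n → A) (h : Fin n → H)
    (hnull : ∑ i, ∑ j, (inner ℂ (h i) (Ψ (star (a i) * a j) (h j)) : ℂ) = 0)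
    (b : A) (k : H) :
    (∑ j, (inner ℂ k (Ψ (star b * a j) (h j)) : ℂ) = 0) ∧
    (∑ i, (inner ℂ (h i) (Ψ (star (a i) * b) k) : ℂ) = 0) := by
  apply quad_aux _ _ (inner ℂ k (Ψ (star b * b) k) : ℂ)
  intro c
  have this1 := hΨ (n+1) (Fin.cons b a) (Fin.cons (c • k) h)
  have expand : ∑ i : Fin (n+1), ∑ j : Fin (n+1), (inner ℂ ((Fin.cons (c • k) h : Fin (n+1) → H) i)
        ((Ψ (star ((Fin.cons b a : Fin (n+1) → A) i) * (Fin.cons b a : Fin (n+1) → A) j)) ((Fin.cons (c • k) h : Fin (n+1) → H) j)) : ℂ)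
      = (starRingEnd ℂ) c * ∑ j, (inner ℂ k (Ψ (star b * a j) (h j)) : ℂ)
        + c * ∑ i, (inner ℂ (h i) (Ψ (star (a i) * b) k) : ℂ)
        + (starRingEnd ℂ) c * c * (inner ℂ k (Ψ (star b * b) k) : ℂ)
        + ∑ i, ∑ j, (inner ℂ (h i) (Ψ (star (a i) * a j) (h j)) : ℂ) := by
    simp only [Fin.sum_univ_succ, Fin.cons_zero, Fin.cons_succ, map_smul,
      inner_smul_left, inner_smul_right, ContinuousLinearMap.coe_smul', Pi.smul_apply,
      Finset.mul_sum, smul_eq_mul, Finset.sum_add_distrib]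
    ring
  rw [expand, hnull, add_zero] at this1
  exact this1

section Aux
variable {X A H : Type*} [MeasurableSpace X] [NormedRing A] [StarRing A]
    [NormedAlgebra ℂ A] [NormedAddCommGroup H] [InnerProductSpace ℂ H]

lemma CPInstrument.weak_empty (J : CPInstrument X A H) (a : A) (h k : H) :
    (inner ℂ h (J.toFun (∅ : Set X) a k) : ℂ) = 0 := by
  have hs : ∀ n : ℕ, MeasurableSet (∅ : Set X) := fun _ => MeasurableSet.empty
  have hd : Pairwise (Disjoint on (fun _ : ℕ => (∅ : Set X))) := by
    intro i j _
    simp [Function.onFun]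
  have hsum := J.countably_additive a h k (fun _ => ∅) hs hd
  rw [Set.iUnion_empty] at hsum
  have h1 : Filter.Tendsto (fun n : ℕ => ∑ i ∈ Finset.range n,
      (inner ℂ h (J.toFun (∅ : Set X) a k) : ℂ)) Filter.atTop
      (nhds (inner ℂ h (J.toFun (∅ : Set X) a k))) := hsum.tendsto_sum_nat
  have h2 := hsum.summable.tendsto_atTop_zero
  have h3 : Filter.Tendsto (fun _ : ℕ => (inner ℂ h (J.toFun (∅ : Set X) a k) : ℂ))
      Filter.atTop (nhds (inner ℂ h (J.toFun (∅ : Set X) a k))) := tendsto_const_nhds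
  exact tendsto_nhds_unique h3 h2

lemma CPInstrument.weak_add (J : CPInstrument X A H) {s : Set X} (hs : MeasurableSet s)
    (a : A) (h k : H) :
    (inner ℂ h (J.toFun (Set.univ : Set X) a k) : ℂ)
      = inner ℂ h (J.toFun s a k) + inner ℂ h (J.toFun sᶜ a k) := by
  set f : ℕ → Set X := fun n => if n = 0 then s else if n = 1 then sᶜ else ∅ with hf
  have hms : ∀ n, MeasurableSet (f n) := by
    intro n
    simp only [hf]
    split_ifs
    · exact hs
    · exact hs.compl
    · exact MeasurableSet.empty
  have hd : Pairwise (Disjoint on f) := by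
    intro i j hij
    simp only [Function.onFun, hf]
    split_ifs <;>
      first
      | exact (hij (by omega)).elim
      | exact disjoint_compl_right
      | exact disjoint_compl_left
      | exact Set.disjoint_empty _
      | exact Set.empty_disjoint _
  have hunion : (⋃ n, f n) = Set.univ := by
    ext x
    simp only [Set.mem_iUnion, Set.mem_univ, iff_true]
    by_cases hx : x ∈ s
    · exact ⟨0, by simp [hf, hx]⟩
    · exact ⟨1, by simp [hf, hx]⟩
  have hsum := J.countably_additive a h k f hms hd
  rw [hunion] at hsum
  have hzero : ∀ n ∉ ({0, 1} : Finset ℕ),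
      (inner ℂ h (J.toFun (f n) a k) : ℂ) = 0 := by
    intro n hn
    simp only [Finset.mem_insert, Finset.mem_singleton, not_or] at hn
    have : f n = ∅ := by simp [hf, hn.1, hn.2]
    rw [this]
    exact J.weak_empty a h k
  have hsum2 : HasSum (fun n => (inner ℂ h (J.toFun (f n) a k) : ℂ))
      (∑ n ∈ ({0, 1} : Finset ℕ), (inner ℂ h (J.toFun (f n) a k) : ℂ)) :=
    hasSum_sum_of_ne_finset_zero hzero
  have := hsum.unique hsum2
  rw [this]
  rw [show ({0, 1} : Finset ℕ) = insert 0 {1} from rfl,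
    Finset.sum_insert (by decide), Finset.sum_singleton]
  simp [hf]

end Aux

/-- **(Ozawa)** A unital CP instrument is decomposable (`ℐ(A)(a) = φ_ℐ(a) μ_ℐ(A)`)
whenever its CP marginal `φ_ℐ` is a *-homomorphism or its POVM marginal `μ_ℐ` is a
projection-valued measure. -/
theorem CPInstrument.decomposable_of_marginal_spectral
    {X A H : Type*} [MeasurableSpace X]
    [NormedRing A] [StarRing A] [CStarRing A] [NormedAlgebra ℂ A] [StarModule ℂ A]
    [CompleteSpace A] [NormedAddCommGroup H] [InnerProductSpace ℂ H] [CompleteSpace H]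
    (J : CPInstrument X A H) (hu : J.IsUnital)
    (hmarg : ((∀ a b : A, J.toFun Set.univ (a * b) = J.toFun Set.univ a * J.toFun Set.univ b) ∧
        (∀ a : A, J.toFun Set.univ (star a) = star (J.toFun Set.univ a))) ∨
      (∀ s : Set X, MeasurableSet s → IsSelfAdjoint (J.toFun s 1) ∧
        (J.toFun s 1) * (J.toFun s 1) = J.toFun s 1)) :
    ∀ (s : Set X) (a : A), MeasurableSet s →
      J.toFun s a = J.toFun Set.univ a * J.toFun s 1 := by
  intro s a hs
  refine ContinuousLinearMap.ext fun k => ?_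
  refine ext_inner_left ℂ fun h => ?_
  rw [ContinuousLinearMap.mul_apply]
  rcases hmarg with ⟨hmul, hstar⟩ | hproj
  · -- φ is a *-homomorphism
    have key : ∀ (b : A) (x y : H),
        (inner ℂ x (J.toFun s (star b) y) : ℂ)
          = inner ℂ (J.toFun Set.univ b x) (J.toFun s 1 y) := by
      intro b x y
      set aa : Fin 2 → A := ![b, 1] with haa
      set hh : Fin 2 → H := ![x, -(J.toFun Set.univ b x)] with hhh
      have hQsum : (∑ i, ∑ j, (inner ℂ (hh i) (J.toFun s (star (aa i) * aa j) (hh j)) : ℂ))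
          + (∑ i, ∑ j, (inner ℂ (hh i) (J.toFun sᶜ (star (aa i) * aa j) (hh j)) : ℂ)) = 0 := by
        have hcomb : (∑ i, ∑ j, (inner ℂ (hh i) (J.toFun s (star (aa i) * aa j) (hh j)) : ℂ))
            + (∑ i, ∑ j, (inner ℂ (hh i) (J.toFun sᶜ (star (aa i) * aa j) (hh j)) : ℂ))
            = ∑ i, ∑ j, (inner ℂ (hh i) (J.toFun Set.univ (star (aa i) * aa j) (hh j)) : ℂ) := by
          rw [← Finset.sum_add_distrib]
          refine Finset.sum_congr rfl fun i _ => ?_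
          rw [← Finset.sum_add_distrib]
          refine Finset.sum_congr rfl fun j _ => ?_
          exact (J.weak_add hs _ _ _).symm
        rw [hcomb]
        have hone : J.toFun Set.univ (1:A) = 1 := hu
        simp only [haa, hhh, Fin.sum_univ_two, Matrix.cons_val_zero, Matrix.cons_val_one,
          Matrix.head_cons, star_one, one_mul, mul_one, map_neg, inner_neg_neg,
          inner_neg_left, inner_neg_right, hone, ContinuousLinearMap.one_apply,
          ContinuousLinearMap.neg_apply]
        rw [hmul (star b) b]
        simp only [ContinuousLinearMap.mul_apply]
        ring
      have hQ1 : (∑ i, ∑ j, (inner ℂ (hh i) (J.toFun s (star (aa i) * aa j) (hh j)) : ℂ)) = 0 := by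
        have h1 := J.cp s hs 2 aa hh
        have h2 := J.cp sᶜ hs.compl 2 aa hh
        refine le_antisymm ?_ h1
        calc (∑ i, ∑ j, (inner ℂ (hh i) (J.toFun s (star (aa i) * aa j) (hh j)) : ℂ))
            ≤ (∑ i, ∑ j, (inner ℂ (hh i) (J.toFun s (star (aa i) * aa j) (hh j)) : ℂ))
              + (∑ i, ∑ j, (inner ℂ (hh i) (J.toFun sᶜ (star (aa i) * aa j) (hh j)) : ℂ)) :=
              le_add_of_nonneg_right h2
          _ = 0 := hQsum
      have horth := (IsCompletelyPositive.orth (J.cp s hs) aa hh hQ1 1 y).2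
      simp only [haa, hhh, Fin.sum_univ_two, Matrix.cons_val_zero, Matrix.cons_val_one,
        Matrix.head_cons, star_one, mul_one, inner_neg_left] at horth
      linear_combination horth
    have := key (star a) h k
    rw [star_star] at this
    rw [this, hstar a, ContinuousLinearMap.star_eq_adjoint,
      ContinuousLinearMap.adjoint_inner_left]
  · -- μ is projection valued
    have hii : ∀ (t : Set X), MeasurableSet t → ∀ (b : A) (x y : H),
        (inner ℂ x (J.toFun t b (y - J.toFun t 1 y)) : ℂ) = 0 := by
      intro t ht b x y
      have hnull : ∑ i : Fin 1, ∑ j : Fin 1,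
          (inner ℂ ((fun _ : Fin 1 => y - J.toFun t 1 y) i)
            (J.toFun t (star ((fun _ : Fin 1 => (1:A)) i) * (fun _ : Fin 1 => (1:A)) j)
              ((fun _ : Fin 1 => y - J.toFun t 1 y) j)) : ℂ) = 0 := by
        simp only [Fin.sum_univ_one, star_one, one_mul]
        rw [map_sub]
        have hPP : J.toFun t 1 (J.toFun t 1 y) = J.toFun t 1 y := by
          have hc := congrArg (fun T : H →L[ℂ] H => T y) (hproj t ht).2
          simpa only [ContinuousLinearMap.mul_apply] using hc
        rw [hPP, sub_self, inner_zero_right]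
      have horth := (IsCompletelyPositive.orth (J.cp t ht) (fun _ : Fin 1 => (1:A))
        (fun _ : Fin 1 => y - J.toFun t 1 y) hnull (star b) x).1
      simpa only [Fin.sum_univ_one, star_star, mul_one] using horth
    have hop : ∀ y : H, J.toFun s 1 y + J.toFun sᶜ 1 y = y := by
      intro y
      refine ext_inner_left ℂ fun x => ?_
      rw [inner_add_right, ← J.weak_add hs 1 x y, hu, ContinuousLinearMap.one_apply]
    have hPk : J.toFun s 1 k = k - J.toFun sᶜ 1 k := eq_sub_of_add_eq (hop k)
    rw [J.weak_add hs a h (J.toFun s 1 k)]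
    have e1 : (inner ℂ h (J.toFun sᶜ a (J.toFun s 1 k)) : ℂ) = 0 := by
      rw [hPk]
      exact hii sᶜ hs.compl a h k
    have e2 : (inner ℂ h (J.toFun s a (J.toFun s 1 k)) : ℂ) = inner ℂ h (J.toFun s a k) := by
      have hr : J.toFun s a (J.toFun s 1 k)
          = J.toFun s a k - J.toFun s a (k - J.toFun s 1 k) := by
        rw [map_sub, sub_sub_cancel]
      rw [hr, inner_sub_right, hii s hs a h k, sub_zero]
    rw [e1, e2, add_zero]
end
end

section
/- Let ℐ : 𝒪(X) → CP(𝒜, B(ℋ)) be a unital CP instrument with minimal bi-dilation quadruple (𝒦, π, E, V), and let P₁ denote the orthogonal projection of 𝒦 onto 𝒦₁ = [π(𝒜)V(ℋ)]. Suppose that the CP marginal φ_ℐ is an extreme point of the convex set of unital completely positive maps from 𝒜 to B(ℋ) and the POVM marginal μ_ℐ is a projection-valued (spectral) measure. Then P₁E(A)P₁ is a projection for every A ∈ 𝒪(X); consequently the quadruple (𝒦₁, P₁πP₁, P₁EP₁, V) is itself a minimal bi-dilation of ℐ. -/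
open scoped InnerProductSpace ComplexOrder
open Function

noncomputable section

section UCPExtreme

variable {A H : Type*} [NormedRing A] [StarRing A] [NormedAlgebra ℂ A]
    [NormedAddCommGroup H] [InnerProductSpace ℂ H]

/-- A unital completely positive map. -/
def IsUCPMap (φ : A →ₗ[ℂ] (H →L[ℂ] H)) : Prop :=
  IsCompletelyPositive φ ∧ φ 1 = 1

/-- Extreme point of the convex set of unital completely positive maps. -/
def IsExtremeUCPMap (φ : A →ₗ[ℂ] (H →L[ℂ] H)) : Prop :=
  IsUCPMap φ ∧ ∀ (ψ₁ ψ₂ : A →ₗ[ℂ] (H →L[ℂ] H)) (t : ℝ), IsUCPMap ψ₁ → IsUCPMap ψ₂ →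
    0 < t → t < 1 → φ = (t : ℂ) • ψ₁ + ((1 - t : ℝ) : ℂ) • ψ₂ → ψ₁ = φ ∧ ψ₂ = φ

end UCPExtreme

/-- If the CP marginal of a unital CP instrument is an extreme UCP map and its POVM
marginal is spectral, then the compression `P₁E(A)P₁` of the minimal bi-dilation to
`𝒦₁ = [π(𝒜)Vℋ]` is a projection for every `A`; consequently
`(𝒦₁, P₁πP₁, P₁EP₁, V)` is itself a minimal bi-dilation of `ℐ`. -/
theorem CPInstrument.compression_is_spectral_of_extreme_marginals
    {X A H K : Type*} [MeasurableSpace X]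
    [NormedRing A] [StarRing A] [CStarRing A] [NormedAlgebra ℂ A] [StarModule ℂ A]
    [CompleteSpace A] [NormedAddCommGroup H] [InnerProductSpace ℂ H] [CompleteSpace H]
    [NormedAddCommGroup K] [InnerProductSpace ℂ K] [CompleteSpace K]
    (J : CPInstrument X A H) (hu : J.IsUnital)
    (π : A →⋆ₐ[ℂ] (K →L[ℂ] K)) (E : Set X → K →L[ℂ] K) (V : H →L[ℂ] K)
    (hdil : IsMinimalBiDilation J π E V)
    (P₁ : K →L[ℂ] K)
    (hP₁sa : IsSelfAdjoint P₁) (hP₁idem : P₁ * P₁ = P₁)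
    (hP₁range : LinearMap.range (P₁ : K →ₗ[ℂ] K) =
      (Submodule.span ℂ {y : K | ∃ (a : A) (h : H), y = π a (V h)}).topologicalClosure)
    (hext : IsExtremeUCPMap (J.toFun Set.univ))
    (hspec : ∀ s : Set X, MeasurableSet s → IsSelfAdjoint (J.toFun s 1) ∧
      (J.toFun s 1) * (J.toFun s 1) = J.toFun s 1) :
    (∀ s : Set X, MeasurableSet s → IsSelfAdjoint (P₁ * E s * P₁) ∧
      (P₁ * E s * P₁) * (P₁ * E s * P₁) = P₁ * E s * P₁) ∧
    (∀ (s : Set X) (a : A), MeasurableSet s →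
      J.toFun s a = (ContinuousLinearMap.adjoint V).comp
        (((P₁ * π a * P₁) * (P₁ * E s * P₁)).comp V)) ∧
    (∀ (s : Set X) (a : A), MeasurableSet s →
      (P₁ * E s * P₁) * (P₁ * π a * P₁) = (P₁ * π a * P₁) * (P₁ * E s * P₁)) ∧
    ((Submodule.span ℂ {y : K | ∃ (a : A) (s : Set X) (h : H), MeasurableSet s ∧
        y = (P₁ * π a * P₁) ((P₁ * E s * P₁) (V h))}).topologicalClosure
      = LinearMap.range (P₁ : K →ₗ[ℂ] K)) := by
  classical
  obtain ⟨hpvm, hcommEA, hdila, hmin⟩ := hdil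
  set S₁ : Set K := {y : K | ∃ (a : A) (h : H), y = π a (V h)} with hS₁def
  -- pointwise idempotence of P₁
  have hidem : ∀ y : K, P₁ (P₁ y) = P₁ y := by
    intro y
    have := ContinuousLinearMap.ext_iff.mp hP₁idem y
    simpa [ContinuousLinearMap.mul_apply] using this
  have hfix : ∀ x : K, x ∈ (Submodule.span ℂ S₁).topologicalClosure → P₁ x = x := by
    intro x hx
    rw [← hP₁range] at hx
    obtain ⟨y, rfl⟩ := hx
    exact hidem y
  have hmemM : ∀ x : K, P₁ x ∈ (Submodule.span ℂ S₁).topologicalClosure := by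
    intro x
    rw [← hP₁range]; exact ⟨x, rfl⟩
  have hS₁M : S₁ ⊆ ((Submodule.span ℂ S₁).topologicalClosure : Set K) := fun y hy =>
    Submodule.le_topologicalClosure _ (Submodule.subset_span hy)
  have hQV : ∀ h : H, P₁ (V h) = V h := by
    intro h
    refine hfix _ (hS₁M ⟨1, h, by simp⟩)
  -- stability of the closure under an operator that preserves the span
  have hstabM : ∀ (T : K →L[ℂ] K),
      (Submodule.map (T : K →ₗ[ℂ] K) (Submodule.span ℂ S₁) ≤ Submodule.span ℂ S₁) →
      ∀ x ∈ (Submodule.span ℂ S₁).topologicalClosure,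
        T x ∈ (Submodule.span ℂ S₁).topologicalClosure := by
    intro T hT x hx
    have hx' : x ∈ closure ((Submodule.span ℂ S₁ : Submodule ℂ K) : Set K) := hx
    have h1 : T x ∈ closure (T '' ((Submodule.span ℂ S₁ : Submodule ℂ K) : Set K)) :=
      image_closure_subset_closure_image T.continuous ⟨x, hx', rfl⟩
    have h2 : closure (T '' ((Submodule.span ℂ S₁ : Submodule ℂ K) : Set K)) ⊆
        closure ((Submodule.span ℂ S₁ : Submodule ℂ K) : Set K) := by
      apply closure_mono
      rintro y ⟨z, hz, rfl⟩
      exact hT ⟨z, hz, rfl⟩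
    exact h2 h1
  -- π a preserves the span
  have hπspan : ∀ a : A,
      Submodule.map ((π a : K →L[ℂ] K) : K →ₗ[ℂ] K) (Submodule.span ℂ S₁)
        ≤ Submodule.span ℂ S₁ := by
    intro a
    rw [Submodule.map_span, Submodule.span_le]
    rintro y ⟨z, ⟨b, h, rfl⟩, rfl⟩
    refine Submodule.subset_span ⟨a * b, h, ?_⟩
    simp [map_mul, ContinuousLinearMap.mul_apply]
  have hQπQ : ∀ a : A, P₁ * π a * P₁ = π a * P₁ := by
    intro a; ext x
    simp only [ContinuousLinearMap.mul_apply]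
    exact hfix _ (hstabM (π a) (hπspan a) _ (hmemM x))
  have hcommπ : ∀ a : A, P₁ * π a = π a * P₁ := by
    intro a
    have hb := congrArg star (hQπQ (star a))
    simp only [star_mul, hP₁sa.star_eq, ContinuousLinearMap.star_eq_adjoint] at hb
    have hπstar : star (π (star a)) = π a := by
      rw [← map_star]; simp
    rw [ContinuousLinearMap.star_eq_adjoint] at hπstar
    rw [hπstar] at hb
    -- hb : P₁ * (π a * P₁) = P₁ * π a
    have h2 : P₁ * π a * P₁ = P₁ * π a := by rw [mul_assoc]; exact hb
    exact h2.symm.trans (hQπQ a)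
  -- V is an isometry
  have hVVapp : ∀ h : H, ContinuousLinearMap.adjoint V (V h) = h := by
    have h0 := hdila Set.univ 1 MeasurableSet.univ
    rw [hu, map_one π, hpvm.map_univ, one_mul] at h0
    intro h
    have := ContinuousLinearMap.ext_iff.mp h0.symm h
    simpa using this
  -- E s ∘ V = V ∘ μ s
  have hEsV : ∀ (s : Set X), MeasurableSet s → ∀ h : H,
      E s (V h) = V (J.toFun s 1 h) := by
    intro s hs h
    have hdil1 : ∀ k : H, J.toFun s 1 k = ContinuousLinearMap.adjoint V (E s (V k)) := by
      intro k
      have h0 := hdila s 1 hs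
      rw [map_one π, one_mul] at h0
      have := ContinuousLinearMap.ext_iff.mp h0 k
      simpa using this
    have hμsa := (hspec s hs).1
    have hμ2 : ∀ x : H, J.toFun s 1 (J.toFun s 1 x) = J.toFun s 1 x := by
      intro x
      have := ContinuousLinearMap.ext_iff.mp (hspec s hs).2 x
      simpa [ContinuousLinearMap.mul_apply] using this
    have hEsa := hpvm.selfAdjoint s hs
    have hE2 : ∀ x : K, E s (E s x) = E s x := by
      intro x
      have := ContinuousLinearMap.ext_iff.mp (hpvm.idempotent s hs) x
      simpa [ContinuousLinearMap.mul_apply] using this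
    set μ : H →L[ℂ] H := J.toFun s 1 with hμ
    have ha : ∀ (x y : K), (inner ℂ (E s x) y : ℂ) = inner ℂ x (E s y) := by
      intro x y
      conv_lhs => rw [← hEsa.adjoint_eq]
      exact ContinuousLinearMap.adjoint_inner_left (E s) y x
    have hμmove : ∀ (x y : H), (inner ℂ (μ x) y : ℂ) = inner ℂ x (μ y) := by
      intro x y
      conv_lhs => rw [← hμsa.adjoint_eq]
      exact ContinuousLinearMap.adjoint_inner_left μ y x
    have hv : ∀ (x : H) (y : K), (inner ℂ (V x) y : ℂ) = inner ℂ x (ContinuousLinearMap.adjoint V y) := by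
      intro x y
      exact (ContinuousLinearMap.adjoint_inner_right V x y).symm
    rw [← sub_eq_zero, ← inner_self_eq_zero (𝕜 := ℂ) (x := E s (V h) - V (μ h))]
    have ea : (inner ℂ (E s (V h)) (E s (V h)) : ℂ) = inner ℂ (μ h) (μ h) := by
      rw [ha, hE2]
      have : (inner ℂ (V h) (E s (V h)) : ℂ) = inner ℂ h (μ h) := by
        rw [hv, ← hdil1]
      rw [this, ← hμ2 h, ← hμmove]
      rw [hμ2]
    have eb : (inner ℂ (E s (V h)) (V (μ h)) : ℂ) = inner ℂ (μ h) (μ h) := by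
      have := ContinuousLinearMap.adjoint_inner_left V (μ h) (E s (V h))
      rw [← this, ← hdil1]
    have ec : (inner ℂ (V (μ h)) (E s (V h)) : ℂ) = inner ℂ (μ h) (μ h) := by
      rw [hv, ← hdil1]
    have ed : (inner ℂ (V (μ h)) (V (μ h)) : ℂ) = inner ℂ (μ h) (μ h) := by
      rw [hv, hVVapp]
    rw [inner_sub_left, inner_sub_right, inner_sub_right, ea, eb, ec, ed]
    ring
  -- E s preserves the span
  have hEspan : ∀ (s : Set X), MeasurableSet s →
      Submodule.map ((E s : K →L[ℂ] K) : K →ₗ[ℂ] K) (Submodule.span ℂ S₁)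
        ≤ Submodule.span ℂ S₁ := by
    intro s hs
    rw [Submodule.map_span, Submodule.span_le]
    rintro y ⟨z, ⟨b, h, rfl⟩, rfl⟩
    refine Submodule.subset_span ⟨b, J.toFun s 1 h, ?_⟩
    have h1 : E s (π b (V h)) = π b (E s (V h)) := by
      have := ContinuousLinearMap.ext_iff.mp (hcommEA s b hs) (V h)
      simpa [ContinuousLinearMap.mul_apply] using this
    simp only [ContinuousLinearMap.coe_coe]
    rw [h1, hEsV s hs h]
  have hQEQ : ∀ (s : Set X), MeasurableSet s → P₁ * E s * P₁ = E s * P₁ := by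
    intro s hs; ext x
    simp only [ContinuousLinearMap.mul_apply]
    exact hfix _ (hstabM (E s) (hEspan s hs) _ (hmemM x))
  have hcommE : ∀ (s : Set X), MeasurableSet s → P₁ * E s = E s * P₁ := by
    intro s hs
    have hb := congrArg star (hQEQ s hs)
    simp only [star_mul, hP₁sa.star_eq, (hpvm.selfAdjoint s hs).star_eq] at hb
    -- hb : P₁ * (E s * P₁) = P₁ * E s
    have h2 : P₁ * E s * P₁ = P₁ * E s := by rw [mul_assoc]; exact hb
    exact h2.symm.trans (hQEQ s hs)
  have hPabs : ∀ (T : K →L[ℂ] K), P₁ * T = T * P₁ → P₁ * (T * P₁) = T * P₁ := by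
    intro T hT
    rw [← mul_assoc, hT, mul_assoc, hP₁idem]
  refine ⟨?_, ?_, ?_, ?_⟩
  · -- compressions are projections
    intro s hs
    rw [hQEQ s hs]
    constructor
    · have : star (E s * P₁) = E s * P₁ := by
        rw [star_mul, hP₁sa.star_eq, (hpvm.selfAdjoint s hs).star_eq]
        exact hcommE s hs
      exact this
    · calc (E s * P₁) * (E s * P₁) = E s * (P₁ * (E s * P₁)) := by rw [mul_assoc]
        _ = E s * (E s * P₁) := by rw [hPabs _ (hcommE s hs)]
        _ = (E s * E s) * P₁ := by rw [mul_assoc]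
        _ = E s * P₁ := by rw [hpvm.idempotent s hs]
  · -- dilation property
    intro s a hs
    rw [hdila s a hs]
    have key : (P₁ * π a * P₁) * (P₁ * E s * P₁) = π a * (E s * P₁) := by
      rw [hQπQ a, hQEQ s hs, mul_assoc, hPabs _ (hcommE s hs)]
    rw [key]
    congr 1
    ext h
    simp only [ContinuousLinearMap.comp_apply, ContinuousLinearMap.mul_apply]
    rw [hQV h]
  · -- commutation
    intro s a hs
    rw [hQπQ a, hQEQ s hs]
    calc (E s * P₁) * (π a * P₁) = E s * (π a * P₁) := by
          rw [mul_assoc, hPabs _ (hcommπ a)]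
      _ = (E s * π a) * P₁ := by rw [mul_assoc]
      _ = (π a * E s) * P₁ := by rw [hcommEA s a hs]
      _ = π a * (E s * P₁) := by rw [mul_assoc]
      _ = (π a * P₁) * (E s * P₁) := by
          rw [mul_assoc (π a) P₁ (E s * P₁), hPabs _ (hcommE s hs)]
  · -- minimality
    rw [hP₁range]
    apply le_antisymm
    · apply Submodule.topologicalClosure_mono
      apply Submodule.span_mono
      rintro y ⟨a, s, h, hs, rfl⟩
      refine ⟨a, J.toFun s 1 h, ?_⟩
      simp only [ContinuousLinearMap.mul_apply]
      rw [hQV h, hEsV s hs h, hQV (J.toFun s 1 h), hQV (J.toFun s 1 h)]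
      exact hfix _ (hS₁M ⟨a, J.toFun s 1 h, rfl⟩)
    · apply Submodule.topologicalClosure_mono
      apply Submodule.span_mono
      rintro y ⟨a, h, rfl⟩
      refine ⟨a, Set.univ, h, MeasurableSet.univ, ?_⟩
      simp only [ContinuousLinearMap.mul_apply, hpvm.map_univ, ContinuousLinearMap.one_apply]
      rw [hQV h, hQV h, hQV h]
      exact (hfix _ (hS₁M ⟨a, h, rfl⟩)).symm
end
end
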